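/- arXiv:2206.03704 — 5 statements merged into one kernel-verified Lean document; each statement's English description precedes it below -/
import Mathlib

section
/- If the independence complex Ind(G) of a finite simple graph G is a quasi-forest simplicial complex, then G does not contain an induced cycle C_k for any k ≥ 5. -/
open Finset

/-- A (finite) simplicial complex on vertex type `V`: a downward-closed
collection of finite subsets of `V`. -/
structure SimplicialComplex (V : Type*) [DecidableEq V] [Fintype V] where
  faces : Finset (Finset V)
  down_closed : ∀ F ∈ faces, ∀ H ⊆ F, H ∈ faces

variable {V : Type*} [DecidableEq V] [Fintype V]

/-- The facets (maximal faces) of a simplicial complex. -/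
def SimplicialComplex.facetSet (Δ : SimplicialComplex V) : Finset (Finset V) :=
  Δ.faces.filter (fun F => ∀ G ∈ Δ.faces, F ⊆ G → F = G)

/-- `F` is a leaf of the collection of facets `𝒞`: either it is the only
member, or there is a branch `M ≠ F` with `N ∩ F ⊆ M ∩ F` for all `N ≠ F`. -/
def IsLeafOf (𝒞 : Finset (Finset V)) (F : Finset V) : Prop :=
  F ∈ 𝒞 ∧ (𝒞 = {F} ∨ ∃ M ∈ 𝒞, M ≠ F ∧ ∀ N ∈ 𝒞, N ≠ F → N ∩ F ⊆ M ∩ F)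

/-- A quasi-forest: there is an ordering `F₁, …, F_r` of the facets such that
`Fᵢ` is a leaf of `⟨F₁, …, Fᵢ⟩` for each `i`. -/
def SimplicialComplex.IsQuasiForest (Δ : SimplicialComplex V) : Prop :=
  ∃ l : List (Finset V), l.Nodup ∧ l.toFinset = Δ.facetSet ∧
    ∀ i (h : i < l.length), IsLeafOf (l.take (i + 1)).toFinset l[i]

/-- A forest: every subcomplex (generated by a nonempty subset of the facets)
has a leaf. -/
def SimplicialComplex.IsForest (Δ : SimplicialComplex V) : Prop :=
  ∀ S ⊆ Δ.facetSet, S.Nonempty → ∃ F, IsLeafOf S F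

/-- The simplicial complex generated by a collection of finite sets. -/
def genBy (S : Finset (Finset V)) : SimplicialComplex V where
  faces := Finset.univ.filter (fun F => ∃ G ∈ S, F ⊆ G)
  down_closed := by
    intro F hF H hH
    simp only [Finset.mem_filter, Finset.mem_univ, true_and] at *
    obtain ⟨G, hG, hFG⟩ := hF
    exact ⟨G, hG, hH.trans hFG⟩

/-- The 1-skeleton of a simplicial complex, as a simple graph. -/
def SimplicialComplex.oneSkeleton (Δ : SimplicialComplex V) : SimpleGraph V where
  Adj a b := a ≠ b ∧ ({a, b} : Finset V) ∈ Δ.faces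
  symm := by
    constructor
    intro a b ⟨hab, h⟩
    exact ⟨hab.symm, by rwa [Finset.pair_comm]⟩
  loopless := by constructor; intro a ⟨h, _⟩; exact h rfl

/-- `G` has an induced cycle of length `k`: an injection `ZMod k → V` whose
image induces exactly the cycle adjacencies. -/
def SimpleGraph.HasInducedCycle {W : Type*} (G : SimpleGraph W) (k : ℕ) : Prop :=
  3 ≤ k ∧ ∃ f : ZMod k → W, Function.Injective f ∧
    ∀ i j : ZMod k, G.Adj (f i) (f j) ↔ (i = j + 1 ∨ j = i + 1)

/-- A simplicial `k`-cycle `S_k` in `Δ`: an induced `k`-cycle in the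
1-skeleton such that no facet of `Δ` contains more than two of its vertices. -/
def SimplicialComplex.HasSk (Δ : SimplicialComplex V) (k : ℕ) : Prop :=
  3 ≤ k ∧ ∃ f : ZMod k → V, Function.Injective f ∧
    (∀ i j : ZMod k, Δ.oneSkeleton.Adj (f i) (f j) ↔ (i = j + 1 ∨ j = i + 1)) ∧
    ∀ F ∈ Δ.facetSet, ∀ i j l : ZMod k,
      f i ∈ F → f j ∈ F → f l ∈ F → (i = j ∨ i = l ∨ j = l)

/-- A simplicial `k`-point `P_k` (for `k ≥ 3`). -/
def SimplicialComplex.HasPkAux (Δ : SimplicialComplex V) (k : ℕ) : Prop :=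
  ∃ t : V, ∃ J : Finset V, t ∉ J ∧ J.card = k ∧
    (∀ j ∈ J, insert t (J.erase j) ∈ Δ.faces) ∧ insert t J ∉ Δ.faces

/-- `Δ` has a simplicial `k`-point; by definition a `P_2` is an `S_3`. -/
def SimplicialComplex.HasPk (Δ : SimplicialComplex V) (k : ℕ) : Prop :=
  if k = 2 then Δ.HasSk 3 else Δ.HasPkAux k

/-- `Δ` is flag: every minimal nonface has exactly two elements. -/
def SimplicialComplex.IsFlag (Δ : SimplicialComplex V) : Prop :=
  ∀ F : Finset V, F ∉ Δ.faces → (∀ H ⊂ F, H ∈ Δ.faces) → F.card = 2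

/-- The independence complex of a graph. -/
def indComplex (G : SimpleGraph V) [DecidableRel G.Adj] : SimplicialComplex V where
  faces := Finset.univ.filter (fun F => ∀ a ∈ F, ∀ b ∈ F, ¬ G.Adj a b)
  down_closed := by
    intro F hF H hH
    simp only [Finset.mem_filter, Finset.mem_univ, true_and] at *
    intro a ha b hb
    exact hF a (hH ha) b (hH hb)


section Aux

variable {V : Type*} [DecidableEq V] [Fintype V]

lemma zmod_cast_inj {m x y : ℕ} [NeZero m] (hx : x < m) (hy : y < m)
    (h : ((x : ℕ) : ZMod m) = ((y : ℕ) : ZMod m)) : x = y := by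
  have := congrArg ZMod.val h
  rwa [ZMod.val_cast_of_lt hx, ZMod.val_cast_of_lt hy] at this

lemma exists_facet (Δ : SimplicialComplex V) {F : Finset V} (hF : F ∈ Δ.faces) :
    ∃ M ∈ Δ.facetSet, F ⊆ M := by
  obtain ⟨M, hM, hmax⟩ := Finset.exists_max_image (Δ.faces.filter (fun H => F ⊆ H))
    Finset.card (⟨F, by simp [hF]⟩)
  simp only [Finset.mem_filter] at hM
  refine ⟨M, ?_, hM.2⟩
  simp only [SimplicialComplex.facetSet, Finset.mem_filter]
  refine ⟨hM.1, fun G hG hMG => Finset.eq_of_subset_of_card_le hMG ?_⟩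
  exact hmax G (by simp [hG, hM.2.trans hMG])

omit [Fintype V] in
lemma key (m : ℕ) (hm : 4 ≤ m) (u : ZMod m → V) :
    ∀ l : List (Finset V),
    (∀ F ∈ l, ∀ a b : ZMod m, u a ∈ F → u b ∈ F → a = b ∨ a = b + 1 ∨ b = a + 1) →
    (∀ i (h : i < l.length), IsLeafOf (l.take (i + 1)).toFinset l[i]) →
    (∀ a : ZMod m, ∃ F ∈ l, u a ∈ F ∧ u (a + 1) ∈ F) → False := by
  haveI : NeZero m := ⟨by omega⟩
  have h1 : (1 : ZMod m) ≠ 0 := fun h => by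
    have := zmod_cast_inj (m := m) (x := 1) (y := 0) (by omega) (by omega) (by push_cast; exact h)
    omega
  have h2 : (2 : ZMod m) ≠ 0 := fun h => by
    have := zmod_cast_inj (m := m) (x := 2) (y := 0) (by omega) (by omega) (by push_cast; exact h)
    omega
  have h3 : (3 : ZMod m) ≠ 0 := fun h => by
    have := zmod_cast_inj (m := m) (x := 3) (y := 0) (by omega) (by omega) (by push_cast; exact h)
    omega
  have no3 : ∀ F' : Finset V,
      (∀ a b : ZMod m, u a ∈ F' → u b ∈ F' → a = b ∨ a = b + 1 ∨ b = a + 1) →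
      ∀ a : ZMod m, u a ∈ F' → u (a + 2) ∈ F' → False := by
    intro F' hf a h0 h2'
    rcases hf a (a + 2) h0 h2' with h | h | h
    · exact h2 (by linear_combination -h)
    · exact h3 (by linear_combination -h)
    · exact h1 (by linear_combination h)
  intro l
  induction l using List.reverseRecOn with
  | nil =>
    intro _ _ hcover
    obtain ⟨F, hF, _⟩ := hcover 0
    simp at hF
  | append_singleton l' F ih =>
    intro hface hleaf hcover
    have hFmem : F ∈ l' ++ [F] := List.mem_append_right _ (by simp)
    have hfaceF := hface F hFmem
    -- the leaf property for the whole list at index l'.length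
    have hlast : IsLeafOf (l' ++ [F]).toFinset F := by
      have hlt : l'.length < (l' ++ [F]).length := by simp
      have := hleaf l'.length hlt
      rwa [List.getElem_concat_length rfl, List.take_of_length_le (by simp)] at this
    -- restricted hypotheses for l'
    have hface' : ∀ F' ∈ l', ∀ a b : ZMod m,
        u a ∈ F' → u b ∈ F' → a = b ∨ a = b + 1 ∨ b = a + 1 :=
      fun F' hF' => hface F' (List.mem_append_left _ hF')
    have hleaf' : ∀ i (h : i < l'.length), IsLeafOf (l'.take (i + 1)).toFinset l'[i] := by
      intro i h
      have hlt : i < (l' ++ [F]).length := by simp; omega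
      have := hleaf i hlt
      rwa [List.getElem_append_left h, List.take_append_of_le_length (by omega)] at this
    rcases hlast.2 with hsing | ⟨M, hMmem, hMF, hbranch⟩
    · -- everything equals F
      have hall : ∀ G' ∈ l' ++ [F], G' = F := by
        intro G' hG'
        have : G' ∈ (l' ++ [F]).toFinset := List.mem_toFinset.mpr hG'
        rw [hsing] at this
        simpa using this
      obtain ⟨F0, hF0, h00, _⟩ := hcover 0
      obtain ⟨F1, hF1, _, h11⟩ := hcover 1
      rw [hall F0 hF0] at h00
      rw [hall F1 hF1] at h11
      refine no3 F hfaceF 0 h00 ?_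
      rw [show (0 : ZMod m) + 2 = 1 + 1 by ring]
      exact h11
    · have hMl' : M ∈ l' := by
        have := List.mem_toFinset.mp hMmem
        rcases List.mem_append.mp this with h | h
        · exact h
        · simp at h; exact absurd h hMF
      by_cases hedge : ∃ a : ZMod m, u a ∈ F ∧ u (a + 1) ∈ F
      · obtain ⟨a, ha, ha1⟩ := hedge
        -- both cycle vertices of F lie in M
        obtain ⟨N, hN, hN1, hN2⟩ := hcover (a + 1)
        have hNF : N ≠ F := by
          rintro rfl
          refine no3 N hfaceF a ha ?_
          rw [show a + 2 = a + 1 + 1 by ring]; exact hN2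
        have hM1 : u (a + 1) ∈ M := by
          have := hbranch N (List.mem_toFinset.mpr hN) hNF
            (Finset.mem_inter.mpr ⟨hN1, ha1⟩)
          exact (Finset.mem_inter.mp this).1
        obtain ⟨N', hN', hN'1, hN'2⟩ := hcover (a - 1)
        have hN'F : N' ≠ F := by
          rintro rfl
          refine no3 N' hfaceF (a - 1) hN'1 ?_
          rw [show a - 1 + 2 = a + 1 by ring]; exact ha1
        have hMa : u a ∈ M := by
          have h' : u a ∈ N' := by rw [show a = a - 1 + 1 by ring]; exact hN'2
          have := hbranch N' (List.mem_toFinset.mpr hN') hN'F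
            (Finset.mem_inter.mpr ⟨h', ha⟩)
          exact (Finset.mem_inter.mp this).1
        refine ih hface' hleaf' ?_
        intro b
        obtain ⟨Fb, hFb, hb, hb1⟩ := hcover b
        by_cases hFbF : Fb = F
        · subst hFbF
          -- show b = a
          have hba : b = a := by
            rcases hfaceF b a hb ha with h | h | h
            · exact h
            · exfalso
              refine no3 Fb hfaceF a ha ?_
              rw [show a + 2 = (a + 1) + 1 by ring, ← h]; exact hb1
            · exfalso
              refine no3 Fb hfaceF b hb ?_
              rw [show b + 2 = (b + 1) + 1 by ring, ← h]; exact ha1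
          subst hba
          exact ⟨M, hMl', hMa, hM1⟩
        · have hFbl' : Fb ∈ l' := by
            rcases List.mem_append.mp hFb with h | h
            · exact h
            · simp at h; exact absurd h hFbF
          exact ⟨Fb, hFbl', hb, hb1⟩
      · refine ih hface' hleaf' ?_
        intro b
        obtain ⟨Fb, hFb, hb, hb1⟩ := hcover b
        have hFbF : Fb ≠ F := by rintro rfl; exact hedge ⟨b, hb, hb1⟩
        have hFbl' : Fb ∈ l' := by
          rcases List.mem_append.mp hFb with h | h
          · exact h
          · simp at h; exact absurd h hFbF
        exact ⟨Fb, hFbl', hb, hb1⟩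

lemma main_aux (G : SimpleGraph V) [DecidableRel G.Adj]
    (hq : (indComplex G).IsQuasiForest) (m : ℕ) (hm : 4 ≤ m) (u : ZMod m → V)
    (hu1 : ∀ a b : ZMod m, a ≠ b → a ≠ b + 1 → b ≠ a + 1 → G.Adj (u a) (u b))
    (hu2 : ∀ a : ZMod m, ¬ G.Adj (u a) (u (a + 1))) : False := by
  obtain ⟨l, _, hlf, hleaf⟩ := hq
  have hindep : ∀ F ∈ (indComplex G).faces, ∀ x ∈ F, ∀ y ∈ F, ¬ G.Adj x y := by
    intro F hF
    simpa [indComplex] using hF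
  refine key m hm u l ?_ hleaf ?_
  · intro F hF a b ha hb
    have hFf : F ∈ (indComplex G).faces := by
      have : F ∈ (indComplex G).facetSet := by rw [← hlf]; exact List.mem_toFinset.mpr hF
      exact (Finset.mem_filter.mp this).1
    by_contra hcon
    push_neg at hcon
    exact hindep F hFf _ ha _ hb (hu1 a b hcon.1 hcon.2.1 hcon.2.2)
  · intro a
    have hpair : ({u a, u (a + 1)} : Finset V) ∈ (indComplex G).faces := by
      simp only [indComplex, Finset.mem_filter, Finset.mem_univ, true_and]
      intro x hx y hy
      simp only [Finset.mem_insert, Finset.mem_singleton] at hx hy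
      rcases hx with rfl | rfl <;> rcases hy with rfl | rfl
      · exact G.loopless.irrefl _
      · exact hu2 a
      · exact fun h => hu2 a h.symm
      · exact G.loopless.irrefl _
    obtain ⟨M, hM, hsub⟩ := exists_facet _ hpair
    refine ⟨M, ?_, hsub (by simp), hsub (by simp)⟩
    rw [← hlf] at hM
    exact List.mem_toFinset.mp hM

end Aux

/-- If the independence complex of `G` is a quasi-forest, then `G` has no
induced cycle `C_k` for any `k ≥ 5`. -/
theorem stmt0 {V : Type*} [DecidableEq V] [Fintype V] (G : SimpleGraph V)
    [DecidableRel G.Adj] (hq : (indComplex G).IsQuasiForest) :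
    ∀ k : ℕ, 5 ≤ k → ¬ G.HasInducedCycle k := by
  rintro k hk ⟨h3, f, finj, hadj⟩
  rcases eq_or_lt_of_le hk with h5 | h6
  · -- k = 5
    subst h5
    refine main_aux G hq 5 (by norm_num) (fun a => f (2 * a)) ?_ ?_
    · intro a b hab h1 h2
      refine (hadj (2 * a) (2 * b)).mpr ?_
      revert hab h1 h2; revert a b; decide
    · intro a h
      have hdec : ∀ a : ZMod 5, ¬ (2 * a = 2 * (a + 1) + 1 ∨ 2 * (a + 1) = 2 * a + 1) := by decide
      exact hdec a ((hadj (2 * a) (2 * (a + 1))).mp h)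
  · -- 6 ≤ k
    have hk6 : 6 ≤ k := h6
    haveI : NeZero k := ⟨by omega⟩
    have hne : ∀ x y : ℕ, x < k → y < k → x ≠ y → ((x : ZMod k) ≠ (y : ZMod k)) := by
      intro x y hx hy hxy h
      exact hxy (zmod_cast_inj hx hy h)
    set g : ZMod 4 → ZMod k :=
      fun a => if a = 0 then 0 else if a = 1 then 3 else if a = 2 then 1 else 4 with hg
    have hg0 : g 0 = 0 := rfl
    have hg1 : g 1 = 3 := rfl
    have hg2 : g 2 = 1 := rfl
    have hg3 : g 3 = 4 := rfl
    refine main_aux G hq 4 le_rfl (fun a => f (g a)) ?_ ?_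
    · intro a b hab h1 h2
      have hcase : (a = 0 ∧ b = 2) ∨ (a = 2 ∧ b = 0) ∨ (a = 1 ∧ b = 3) ∨ (a = 3 ∧ b = 1) := by
        revert hab h1 h2; revert a b; decide
      refine (hadj (g a) (g b)).mpr ?_
      rcases hcase with ⟨rfl, rfl⟩ | ⟨rfl, rfl⟩ | ⟨rfl, rfl⟩ | ⟨rfl, rfl⟩
      · rw [hg0, hg2]; right; rw [zero_add]
      · rw [hg2, hg0]; left; rw [zero_add]
      · rw [hg1, hg3]; right; norm_num
      · rw [hg3, hg1]; left; norm_num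
    · intro a h
      have hcase : a = 0 ∨ a = 1 ∨ a = 2 ∨ a = 3 := by
        have : ∀ b : ZMod 4, b = 0 ∨ b = 1 ∨ b = 2 ∨ b = 3 := by decide
        exact this a
      have had := (hadj (g a) (g (a + 1))).mp h
      have e04 : ((0 : ℕ) : ZMod k) ≠ ((4 : ℕ) : ZMod k) := hne 0 4 (by omega) (by omega) (by omega)
      have e31 : ((3 : ℕ) : ZMod k) ≠ ((1 : ℕ) : ZMod k) := hne 3 1 (by omega) (by omega) (by omega)
      have e32 : ((3 : ℕ) : ZMod k) ≠ ((2 : ℕ) : ZMod k) := hne 3 2 (by omega) (by omega) (by omega)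
      have e14 : ((1 : ℕ) : ZMod k) ≠ ((4 : ℕ) : ZMod k) := hne 1 4 (by omega) (by omega) (by omega)
      have e15 : ((1 : ℕ) : ZMod k) ≠ ((5 : ℕ) : ZMod k) := hne 1 5 (by omega) (by omega) (by omega)
      have e42 : ((4 : ℕ) : ZMod k) ≠ ((2 : ℕ) : ZMod k) := hne 4 2 (by omega) (by omega) (by omega)
      have e41 : ((4 : ℕ) : ZMod k) ≠ ((1 : ℕ) : ZMod k) := hne 4 1 (by omega) (by omega) (by omega)
      have e05 : ((0 : ℕ) : ZMod k) ≠ ((5 : ℕ) : ZMod k) := hne 0 5 (by omega) (by omega) (by omega)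
      push_cast at e04 e31 e32 e14 e15 e42 e41 e05
      rcases hcase with rfl | rfl | rfl | rfl
      · rw [show (0 : ZMod 4) + 1 = 1 from rfl, hg0, hg1] at had
        rcases had with h' | h'
        · exact e04 (by rw [h']; norm_num)
        · exact e31 (by rw [h']; norm_num)
      · rw [show (1 : ZMod 4) + 1 = 2 from rfl, hg1, hg2] at had
        rcases had with h' | h'
        · exact e32 (by rw [h']; norm_num)
        · exact e14 (by rw [h']; norm_num)
      · rw [show (2 : ZMod 4) + 1 = 3 from rfl, hg2, hg3] at had
        rcases had with h' | h'
        · exact e15 (by rw [h']; norm_num)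
        · exact e42 (by rw [h']; norm_num)
      · rw [show (3 : ZMod 4) + 1 = 0 from rfl, hg3, hg0] at had
        rcases had with h' | h'
        · exact e41 (by rw [h']; norm_num)
        · exact e05 (by rw [h']; norm_num)
end

section
/- If Ind(G) is a quasi-forest and G has no induced 3-cycle and no isolated vertex, then G is a bipartite graph. -/
open Finset

variable {V : Type*} [DecidableEq V] [Fintype V]

section Aux

variable {G : SimpleGraph V}

/-! ### Walk take/drop -/

/-- Take the first `n` steps of a walk. -/
def wtake {W : Type*} {H : SimpleGraph W} {u v : W} :
    (p : H.Walk u v) → (n : ℕ) → H.Walk u (p.getVert n)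
  | .nil, _ => .nil
  | .cons _ _, 0 => .nil
  | .cons h q, n + 1 => .cons h (wtake q n)

/-- Drop the first `n` steps of a walk. -/
def wdrop {W : Type*} {H : SimpleGraph W} {u v : W} :
    (p : H.Walk u v) → (n : ℕ) → H.Walk (p.getVert n) v
  | .nil, _ => .nil
  | .cons h q, 0 => .cons h q
  | .cons _ q, n + 1 => wdrop q n

lemma length_wtake {W : Type*} {H : SimpleGraph W} {u v : W} :
    ∀ (p : H.Walk u v) (n : ℕ), (wtake p n).length = min n p.length
  | .nil, n => by simp [wtake]
  | .cons _ _, 0 => by simp [wtake]; rfl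
  | .cons h q, n + 1 => by
      simp [wtake, length_wtake q n, Nat.succ_min_succ]

lemma length_wdrop {W : Type*} {H : SimpleGraph W} {u v : W} :
    ∀ (p : H.Walk u v) (n : ℕ), (wdrop p n).length = p.length - n
  | .nil, n => by simp [wdrop]
  | .cons _ _, 0 => by simp [wdrop]; rfl
  | .cons h q, n + 1 => by
      simp [wdrop, length_wdrop q n]

lemma getVert_wdrop {W : Type*} {H : SimpleGraph W} {u v : W} : ∀ (p : H.Walk u v) (n k : ℕ),
    (wdrop p n).getVert k = p.getVert (n + k)
  | .nil, n, k => by simp [wdrop, SimpleGraph.Walk.getVert_of_length_le]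
  | .cons _ _, 0, k => by simp [wdrop]; rfl
  | .cons h q, n + 1, k => by
      show (wdrop q n).getVert k = (SimpleGraph.Walk.cons h q).getVert (n + 1 + k)
      rw [Nat.add_right_comm, SimpleGraph.Walk.getVert_cons_succ]
      exact getVert_wdrop q n k

open SimpleGraph in
/-- A minimal odd closed walk is an induced odd cycle. -/
lemma exists_nice_odd_cycle {W : Type*} {H : SimpleGraph W}
    (h : ∃ n, Odd n ∧ ∃ v : W, ∃ w : H.Walk v v, w.length = n) :
    ∃ n, 3 ≤ n ∧ Odd n ∧ ∃ v : W, ∃ w : H.Walk v v, w.length = n ∧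
      (∀ i j, i < j → j < n → w.getVert i ≠ w.getVert j) ∧
      (∀ i j, i < j → j < n → H.Adj (w.getVert i) (w.getVert j) →
        j = i + 1 ∨ (i = 0 ∧ j = n - 1)) := by
  classical
  have hP : ∃ n, Odd n ∧ ∃ v : W, ∃ w : H.Walk v v, w.length = n := h
  set n := Nat.find hP with hn
  obtain ⟨hodd, v, w, hw⟩ := Nat.find_spec hP
  have hmin : ∀ m, m < n → ¬ (Odd m ∧ ∃ v : W, ∃ w : H.Walk v v, w.length = m) :=
    fun m hm => Nat.find_min hP hm
  have hn1 : n ≠ 1 := by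
    intro h1
    have h01 : (0:ℕ) < w.length := by omega
    have := w.adj_getVert_succ h01
    rw [Walk.getVert_zero, w.getVert_of_length_le (by omega)] at this
    exact H.irrefl this
  have hn3 : 3 ≤ n := by
    rcases hodd with ⟨k, hk⟩; omega
  refine ⟨n, hn3, hodd, v, w, hw, ?_, ?_⟩
  · intro i j hij hjn heq
    have hgv : (wdrop w i).getVert (j - i) = w.getVert i := by
      rw [getVert_wdrop]
      have : i + (j - i) = j := by omega
      rw [this]; exact heq.symm
    rw [Nat.odd_iff] at hodd
    rcases Nat.even_or_odd (j - i) with he | hod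
    · rw [Nat.even_iff] at he
      refine hmin (i + (n - j)) (by omega)
        ⟨by rw [Nat.odd_iff]; omega, v, (wtake w i).append ((wdrop w j).copy heq.symm rfl), ?_⟩
      simp only [Walk.length_append, Walk.length_copy, length_wtake, length_wdrop, hw]
      omega
    · refine hmin (j - i) (by omega)
        ⟨hod, _, (wtake (wdrop w i) (j - i)).copy rfl hgv, ?_⟩
      simp only [Walk.length_copy, length_wtake, length_wdrop, hw]
      omega
  · intro i j hij hjn hadj
    by_contra hcon
    push_neg at hcon
    obtain ⟨hne1, hne2⟩ := hcon
    have hgv : (wdrop w i).getVert (j - i) = w.getVert j := by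
      rw [getVert_wdrop]
      congr 1; omega
    rw [Nat.odd_iff] at hodd
    have hij2 : i + 2 ≤ j := by omega
    rcases Nat.even_or_odd ((j - i) + 1) with he | hod
    · rw [Nat.even_iff] at he
      refine hmin (i + (1 + (n - j))) (by omega)
        ⟨by rw [Nat.odd_iff]; omega, v, (wtake w i).append (Walk.cons hadj (wdrop w j)), ?_⟩
      simp only [Walk.length_append, Walk.length_cons, length_wtake, length_wdrop, hw]
      omega
    · refine hmin ((j - i) + 1) (by omega)
        ⟨hod, _, ((wtake (wdrop w i) (j - i)).copy rfl hgv).append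
          (Walk.cons hadj.symm Walk.nil), ?_⟩
      simp only [Walk.length_append, Walk.length_copy, length_wtake, length_wdrop, hw,
        Walk.length_cons, Walk.length_nil]
      omega

/-! ### Skeleton adjacency of a list of facets -/

/-- Adjacency in the 1-skeleton of the complex generated by the list `l`. -/
def skAdj (l : List (Finset V)) (a b : V) : Prop :=
  a ≠ b ∧ ∃ F ∈ l, a ∈ F ∧ b ∈ F

lemma skAdj.symm {l : List (Finset V)} {a b : V} (h : skAdj l a b) : skAdj l b a :=
  ⟨h.1.symm, h.2.imp fun _ ⟨hF, ha, hb⟩ => ⟨hF, hb, ha⟩⟩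

lemma skAdj_mono {l l' : List (Finset V)} (h : ∀ F ∈ l, F ∈ l') {a b : V}
    (hab : skAdj l a b) : skAdj l' a b :=
  ⟨hab.1, hab.2.imp fun F ⟨hF, ha, hb⟩ => ⟨h F hF, ha, hb⟩⟩

lemma nskAdj_symm {l : List (Finset V)} {a b : V} (h : ¬ skAdj l a b) : ¬ skAdj l b a :=
  fun h' => h h'.symm

/-- Descend one edge of an induced cycle (length ≥ 4) to the complex minus its last facet. -/
lemma edge_descend {l' : List (Finset V)} {F M : Finset V}
    (hM : M ∈ l' ++ [F]) (hMF : M ≠ F)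
    (hbr : ∀ N ∈ l' ++ [F], N ≠ F → N ∩ F ⊆ M ∩ F)
    {x y w z : V} (hwy : ¬ skAdj (l' ++ [F]) w y) (hxz : ¬ skAdj (l' ++ [F]) x z)
    (hwyne : w ≠ y) (hxzne : x ≠ z)
    (hxy : skAdj (l' ++ [F]) x y) (hxw : skAdj (l' ++ [F]) x w)
    (hyz : skAdj (l' ++ [F]) y z) :
    skAdj l' x y := by
  set l := l' ++ [F] with hl
  obtain ⟨hne, N, hN, hxN, hyN⟩ := hxy
  rcases (List.mem_append.mp hN) with hN' | hNF
  · exact ⟨hne, N, hN', hxN, hyN⟩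
  · have hNF : N = F := by simpa using hNF
    rw [hNF] at hxN hyN
    have hFl : F ∈ l := by simp [hl]
    have hMl' : M ∈ l' := by
      rcases List.mem_append.mp hM with h | h
      · exact h
      · exact absurd (by simpa using h) hMF
    have hxM : x ∈ M := by
      obtain ⟨hnexw, N', hN', hxN', hwN'⟩ := hxw
      by_cases hN'F : N' = F
      · rw [hN'F] at hwN'
        exact absurd ⟨hwyne, F, hFl, hwN', hyN⟩ hwy
      · exact (Finset.mem_inter.mp (hbr N' hN' hN'F (Finset.mem_inter.mpr ⟨hxN', hxN⟩))).1
    have hyM : y ∈ M := by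
      obtain ⟨hneyz, N', hN', hyN', hzN'⟩ := hyz
      by_cases hN'F : N' = F
      · rw [hN'F] at hzN'
        exact absurd ⟨hxzne, F, hFl, hxN, hzN'⟩ hxz
      · exact (Finset.mem_inter.mp (hbr N' hN' hN'F (Finset.mem_inter.mpr ⟨hyN', hyN⟩))).1
    exact ⟨hne, M, hMl', hxM, hyM⟩

lemma no_induced_C4 : ∀ l : List (Finset V),
    (∀ i (h : i < l.length), IsLeafOf ((l.take (i+1)).toFinset) l[i]) →
    ∀ a b c d : V, a ≠ c → b ≠ d →
    skAdj l a b → skAdj l b c → skAdj l c d → skAdj l d a →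
    ¬ skAdj l a c → ¬ skAdj l b d → False := by
  intro l
  induction l using List.reverseRecOn with
  | nil => rintro _ a b c d _ _ ⟨_, F, hF, _⟩ _ _ _ _ _; simp at hF
  | append_singleton l' F ih =>
    intro hqf a b c d hac hbd hab hbc hcd hda nac nbd
    have hlen : l'.length < (l' ++ [F]).length := by simp
    have hleaf := hqf l'.length hlen
    rw [List.getElem_concat_length rfl] at hleaf
    rw [List.take_of_length_le (by simp)] at hleaf
    obtain ⟨-, hsingle | ⟨M, hM, hMF, hbr⟩⟩ := hleaf
    · have hmem : ∀ N ∈ l' ++ [F], N = F := by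
        intro N hN
        have : N ∈ ({F} : Finset (Finset V)) := hsingle ▸ List.mem_toFinset.mpr hN
        simpa using this
      obtain ⟨-, N, hN, haN, hbN⟩ := hab
      obtain ⟨-, N', hN', -, hcN'⟩ := hbc
      exact nac ⟨hac, F, by simp, (hmem N hN) ▸ haN, (hmem N' hN') ▸ hcN'⟩
    · rw [List.mem_toFinset] at hM
      have hbr' : ∀ N ∈ l' ++ [F], N ≠ F → N ∩ F ⊆ M ∩ F := fun N hN =>
        hbr N (List.mem_toFinset.mpr hN)
      have hab' := edge_descend hM hMF hbr' (nskAdj_symm nbd) nac hbd.symm hac hab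
        hda.symm hbc
      have hbc' := edge_descend hM hMF hbr' nac nbd hac hbd hbc hab.symm hcd
      have hcd' := edge_descend hM hMF hbr' nbd (nskAdj_symm nac) hbd hac.symm hcd hbc.symm hda
      have hda' := edge_descend hM hMF hbr' (nskAdj_symm nac) (nskAdj_symm nbd) hac.symm
        hbd.symm hda hcd.symm hab
      have hsub : ∀ (x : Finset V), x ∈ l' → x ∈ l' ++ [F] := by
        intro x hx; exact List.mem_append_left _ hx
      refine ih ?_ a b c d hac hbd hab' hbc' hcd' hda'
        (fun h => nac (skAdj_mono hsub h)) (fun h => nbd (skAdj_mono hsub h))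
      intro i hi
      have h1 : (l' ++ [F]).take (i+1) = l'.take (i+1) :=
        List.take_append_of_le_length (by omega)
      have h2 := hqf i (by simp; omega)
      rw [h1, List.getElem_append_left hi] at h2
      exact h2

lemma no_induced_C5 : ∀ l : List (Finset V),
    (∀ i (h : i < l.length), IsLeafOf ((l.take (i+1)).toFinset) l[i]) →
    ∀ a b c d e : V, a ≠ c → b ≠ d → c ≠ e → d ≠ a → e ≠ b →
    skAdj l a b → skAdj l b c → skAdj l c d → skAdj l d e → skAdj l e a →
    ¬ skAdj l a c → ¬ skAdj l b d → ¬ skAdj l c e → ¬ skAdj l d a →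
    ¬ skAdj l e b → False := by
  intro l
  induction l using List.reverseRecOn with
  | nil => rintro _ a b c d e _ _ _ _ _ ⟨_, F, hF, _⟩ _ _ _ _ _ _ _ _ _; simp at hF
  | append_singleton l' F ih =>
    intro hqf a b c d e hac hbd hce hda heb hab hbc hcd hde hea nac nbd nce nda neb
    have hlen : l'.length < (l' ++ [F]).length := by simp
    have hleaf := hqf l'.length hlen
    rw [List.getElem_concat_length rfl] at hleaf
    rw [List.take_of_length_le (by simp)] at hleaf
    obtain ⟨-, hsingle | ⟨M, hM, hMF, hbr⟩⟩ := hleaf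
    · have hmem : ∀ N ∈ l' ++ [F], N = F := by
        intro N hN
        have : N ∈ ({F} : Finset (Finset V)) := hsingle ▸ List.mem_toFinset.mpr hN
        simpa using this
      obtain ⟨-, N, hN, haN, hbN⟩ := hab
      obtain ⟨-, N', hN', -, hcN'⟩ := hbc
      exact nac ⟨hac, F, by simp, (hmem N hN) ▸ haN, (hmem N' hN') ▸ hcN'⟩
    · rw [List.mem_toFinset] at hM
      have hbr' : ∀ N ∈ l' ++ [F], N ≠ F → N ∩ F ⊆ M ∩ F := fun N hN =>
        hbr N (List.mem_toFinset.mpr hN)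
      have hab' := edge_descend hM hMF hbr' neb nac heb hac hab hea.symm hbc
      have hbc' := edge_descend hM hMF hbr' nac nbd hac hbd hbc hab.symm hcd
      have hcd' := edge_descend hM hMF hbr' nbd nce hbd hce hcd hbc.symm hde
      have hde' := edge_descend hM hMF hbr' nce nda hce hda hde hcd.symm hea
      have hea' := edge_descend hM hMF hbr' nda neb hda heb hea hde.symm hab
      have hsub : ∀ (x : Finset V), x ∈ l' → x ∈ l' ++ [F] := by
        intro x hx; exact List.mem_append_left _ hx
      refine ih ?_ a b c d e hac hbd hce hda heb hab' hbc' hcd' hde' hea'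
        (fun h => nac (skAdj_mono hsub h)) (fun h => nbd (skAdj_mono hsub h))
        (fun h => nce (skAdj_mono hsub h)) (fun h => nda (skAdj_mono hsub h))
        (fun h => neb (skAdj_mono hsub h))
      intro i hi
      have h1 : (l' ++ [F]).take (i+1) = l'.take (i+1) :=
        List.take_append_of_le_length (by omega)
      have h2 := hqf i (by simp; omega)
      rw [h1, List.getElem_append_left hi] at h2
      exact h2

/-! ### Bridges -/

/-- Every face of a simplicial complex is contained in a facet. -/
lemma face_subset_facet (Δ : SimplicialComplex V) {F : Finset V} (hF : F ∈ Δ.faces) :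
    ∃ H ∈ Δ.facetSet, F ⊆ H := by
  classical
  have hne : (Δ.faces.filter (fun H => F ⊆ H)).Nonempty :=
    ⟨F, Finset.mem_filter.mpr ⟨hF, le_refl F⟩⟩
  obtain ⟨H, hH0, hmax'⟩ := Finset.exists_maximal hne
  have hH : H ∈ Δ.faces.filter (fun H => F ⊆ H) := hH0
  have hmax : ∀ K ∈ Δ.faces.filter (fun H => F ⊆ H), ¬ H < K :=
    fun K hK hlt => hlt.not_ge (hmax' hK hlt.le)
  rw [Finset.mem_filter] at hH
  refine ⟨H, ?_, hH.2⟩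
  rw [SimplicialComplex.facetSet, Finset.mem_filter]
  refine ⟨hH.1, fun K hK hHK => ?_⟩
  by_contra hne'
  exact hmax K (Finset.mem_filter.mpr ⟨hK, hH.2.trans hHK⟩)
    (lt_of_le_of_ne hHK hne')

/-- A triangle gives an induced `3`-cycle. -/
lemma triangle_hasInducedCycle {W : Type*} {H : SimpleGraph W} {a b c : W}
    (hab : H.Adj a b) (hbc : H.Adj b c) (hca : H.Adj c a) : H.HasInducedCycle 3 := by
  refine ⟨le_refl 3, fun i => if i = 0 then a else if i = 1 then b else c, ?_, ?_⟩
  · have key : ∀ k : ZMod 3, k = 0 ∨ k = 1 ∨ k = 2 := by decide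
    intro i j hij
    rcases key i with hi | hi | hi <;> rcases key j with hj | hj | hj <;>
      subst hi <;> subst hj <;> first
        | rfl
        | (simp only [if_pos, if_neg, show (1:ZMod 3) ≠ 0 by decide,
            show (2:ZMod 3) ≠ 0 by decide, show (2:ZMod 3) ≠ 1 by decide, if_true] at hij
           first
             | exact absurd hij hab.ne
             | exact absurd hij hab.ne.symm
             | exact absurd hij hbc.ne
             | exact absurd hij hbc.ne.symm
             | exact absurd hij hca.ne
             | exact absurd hij hca.ne.symm)
  · have key : ∀ k : ZMod 3, k = 0 ∨ k = 1 ∨ k = 2 := by decide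
    intro i j
    rcases key i with hi | hi | hi <;> rcases key j with hj | hj | hj <;>
      subst hi <;> subst hj <;>
      simp only [if_pos, if_neg, show (1:ZMod 3) ≠ 0 by decide,
        show (2:ZMod 3) ≠ 0 by decide, show (2:ZMod 3) ≠ 1 by decide, if_true] <;>
      first
        | exact iff_of_false (H.irrefl) (by decide)
        | exact iff_of_true hab (by decide)
        | exact iff_of_true hab.symm (by decide)
        | exact iff_of_true hbc (by decide)
        | exact iff_of_true hbc.symm (by decide)
        | exact iff_of_true hca (by decide)
        | exact iff_of_true hca.symm (by decide)

end Aux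

/-- If `Ind(G)` is a quasi-forest and `G` has no induced 3-cycle and no
isolated vertex, then `G` is bipartite (2-colorable). -/
theorem stmt1 {V : Type*} [DecidableEq V] [Fintype V] (G : SimpleGraph V)
    [DecidableRel G.Adj] (hq : (indComplex G).IsQuasiForest)
    (h3 : ¬ G.HasInducedCycle 3) (hiso : ∀ v : V, ∃ u : V, G.Adj v u) :
    G.Colorable 2 := by
  classical
  obtain ⟨l, hnodup, hlfac, hqf⟩ := hq
  -- skeleton adjacency of `l` is complement adjacency
  have hface : ∀ a b : V, ¬ G.Adj a b → ({a, b} : Finset V) ∈ (indComplex G).faces := by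
    intro a b hnadj
    simp only [indComplex, Finset.mem_filter, Finset.mem_univ, true_and]
    intro x hx y hy
    simp only [Finset.mem_insert, Finset.mem_singleton] at hx hy
    rcases hx with rfl | rfl <;> rcases hy with rfl | rfl
    · exact G.irrefl
    · exact hnadj
    · exact fun h => hnadj h.symm
    · exact G.irrefl
  have hsk : ∀ a b : V, skAdj l a b ↔ (a ≠ b ∧ ¬ G.Adj a b) := by
    intro a b
    constructor
    · rintro ⟨hne, F, hFl, haF, hbF⟩
      refine ⟨hne, ?_⟩
      have hFf : F ∈ (indComplex G).facetSet := by
        rw [← hlfac]; exact List.mem_toFinset.mpr hFl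
      have hFfaces : F ∈ (indComplex G).faces :=
        (Finset.mem_filter.mp hFf).1
      have hmem : ({a, b} : Finset V) ∈ (indComplex G).faces := by
        refine (indComplex G).down_closed F hFfaces _ ?_
        intro x hx
        simp only [Finset.mem_insert, Finset.mem_singleton] at hx
        rcases hx with rfl | rfl
        · exact haF
        · exact hbF
      simp only [indComplex, Finset.mem_filter, Finset.mem_univ, true_and] at hmem
      exact hmem a (by simp) b (by simp)
    · rintro ⟨hne, hnadj⟩
      obtain ⟨H, hHfac, hsub⟩ := face_subset_facet _ (hface a b hnadj)
      rw [← hlfac] at hHfac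
      exact ⟨hne, H, List.mem_toFinset.mp hHfac, hsub (by simp), hsub (by simp)⟩
  -- no odd closed walk
  have noOdd : ¬ ∃ n, Odd n ∧ ∃ v : V, ∃ w : G.Walk v v, w.length = n := by
    intro hex
    obtain ⟨n, hn3, hodd, v, w, hw, hinj, hchord⟩ := exists_nice_odd_cycle hex
    have hx0 : w.getVert n = w.getVert 0 := by
      rw [SimpleGraph.Walk.getVert_zero, w.getVert_of_length_le hw.le]
    have hadj : ∀ i, i < n → G.Adj (w.getVert i) (w.getVert (i+1)) := fun i hi =>
      w.adj_getVert_succ (by omega)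
    have hlast : G.Adj (w.getVert (n-1)) (w.getVert 0) := by
      have := hadj (n-1) (by omega)
      rwa [show n - 1 + 1 = n by omega, hx0] at this
    have hnadj : ∀ i j, i < j → j < n → j ≠ i + 1 → ¬(i = 0 ∧ j = n-1) →
        ¬ G.Adj (w.getVert i) (w.getVert j) := by
      intro i j hij hjn h1 h2 hadj'
      rcases hchord i j hij hjn hadj' with h | h
      · exact h1 h
      · exact h2 h
    rcases (show n = 3 ∨ n = 5 ∨ 7 ≤ n by rcases hodd with ⟨k, hk⟩; omega) with rfl | rfl | hge
    · exact h3 (triangle_hasInducedCycle (hadj 0 (by norm_num)) (hadj 1 (by norm_num)) hlast)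
    · refine no_induced_C5 l hqf (w.getVert 0) (w.getVert 2) (w.getVert 4) (w.getVert 1)
        (w.getVert 3)
        (hinj 0 4 (by omega) (by omega)) ((hinj 1 2 (by omega) (by omega)).symm)
        ((hinj 3 4 (by omega) (by omega)).symm) ((hinj 0 1 (by omega) (by omega)).symm)
        ((hinj 2 3 (by omega) (by omega)).symm)
        ((hsk _ _).mpr ⟨hinj 0 2 (by omega) (by omega),
          hnadj 0 2 (by omega) (by omega) (by omega) (by omega)⟩)
        ((hsk _ _).mpr ⟨hinj 2 4 (by omega) (by omega),
          hnadj 2 4 (by omega) (by omega) (by omega) (by omega)⟩)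
        ((hsk _ _).mpr ⟨(hinj 1 4 (by omega) (by omega)).symm,
          fun h => hnadj 1 4 (by omega) (by omega) (by omega) (by omega) h.symm⟩)
        ((hsk _ _).mpr ⟨hinj 1 3 (by omega) (by omega),
          hnadj 1 3 (by omega) (by omega) (by omega) (by omega)⟩)
        ((hsk _ _).mpr ⟨(hinj 0 3 (by omega) (by omega)).symm,
          fun h => hnadj 0 3 (by omega) (by omega) (by omega) (by omega) h.symm⟩)
        (fun h => ((hsk _ _).mp h).2 hlast.symm)
        (fun h => ((hsk _ _).mp h).2 (hadj 1 (by omega)).symm)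
        (fun h => ((hsk _ _).mp h).2 (hadj 3 (by omega)).symm)
        (fun h => ((hsk _ _).mp h).2 (hadj 0 (by omega)).symm)
        (fun h => ((hsk _ _).mp h).2 (hadj 2 (by omega)).symm)
    · refine no_induced_C4 l hqf (w.getVert 0) (w.getVert 3) (w.getVert 1) (w.getVert 4)
        (hinj 0 1 (by omega) (by omega)) (hinj 3 4 (by omega) (by omega))
        ((hsk _ _).mpr ⟨hinj 0 3 (by omega) (by omega),
          hnadj 0 3 (by omega) (by omega) (by omega) (by omega)⟩)
        ((hsk _ _).mpr ⟨(hinj 1 3 (by omega) (by omega)).symm,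
          fun h => hnadj 1 3 (by omega) (by omega) (by omega) (by omega) h.symm⟩)
        ((hsk _ _).mpr ⟨hinj 1 4 (by omega) (by omega),
          hnadj 1 4 (by omega) (by omega) (by omega) (by omega)⟩)
        ((hsk _ _).mpr ⟨(hinj 0 4 (by omega) (by omega)).symm,
          fun h => hnadj 0 4 (by omega) (by omega) (by omega) (by omega) h.symm⟩)
        (fun h => ((hsk _ _).mp h).2 (hadj 0 (by omega)))
        (fun h => ((hsk _ _).mp h).2 (hadj 3 (by omega)))
  -- parity coloring
  refine ⟨SimpleGraph.Coloring.mk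
    (fun v => (⟨G.dist ((G.connectedComponentMk v).out) v % 2, Nat.mod_lt _ (by norm_num)⟩ : Fin 2))
    ?_⟩
  intro u v huv heq
  have hcc : G.connectedComponentMk u = G.connectedComponentMk v :=
    SimpleGraph.ConnectedComponent.sound huv.reachable
  have hru : G.Reachable ((G.connectedComponentMk u).out) u :=
    SimpleGraph.ConnectedComponent.exact (Quot.out_eq (G.connectedComponentMk u))
  have hrv : G.Reachable ((G.connectedComponentMk u).out) v := by
    rw [hcc]
    exact SimpleGraph.ConnectedComponent.exact (Quot.out_eq (G.connectedComponentMk v))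
  obtain ⟨p, hp⟩ := hru.exists_walk_length_eq_dist
  obtain ⟨q, hq'⟩ := hrv.exists_walk_length_eq_dist
  apply noOdd
  refine ⟨p.length + (1 + q.reverse.length), ?_, _,
    p.append (SimpleGraph.Walk.cons huv q.reverse), by
      simp [SimpleGraph.Walk.length_append, SimpleGraph.Walk.length_cons]; omega⟩
  have heq2 : G.dist ((G.connectedComponentMk u).out) u % 2
      = G.dist ((G.connectedComponentMk v).out) v % 2 := congrArg Fin.val heq
  rw [← hcc] at heq2
  rw [SimpleGraph.Walk.length_reverse, hp, hq', Nat.odd_iff]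
  omega
end

section
/- A simplicial complex Δ is a forest if and only if no subcomplex of Δ (generated by a subset of the facets) has a simplicial k-point P_k or a simplicial k-cycle S_k. -/
set_option linter.unusedSectionVars false


open Finset

variable {V : Type*} [DecidableEq V] [Fintype V]

/-! ### basic lemmas -/

lemma zmod_cast_ne_zero {k m : ℕ} (h1 : 0 < m) (h2 : m < k) : ((m : ℕ) : ZMod k) ≠ 0 := by
  intro hh
  rw [ZMod.natCast_eq_zero_iff] at hh
  have := Nat.le_of_dvd h1 hh
  omega

lemma zmod_one_ne_zero {k : ℕ} (h : 2 ≤ k) : (1 : ZMod k) ≠ 0 := by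
  have := zmod_cast_ne_zero (k := k) (m := 1) (by omega) (by omega)
  simpa using this

lemma zmod_two_ne_zero {k : ℕ} (h : 3 ≤ k) : (2 : ZMod k) ≠ 0 := by
  have := zmod_cast_ne_zero (k := k) (m := 2) (by omega) (by omega)
  simpa using this

lemma mem_genBy_faces {S : Finset (Finset V)} {A : Finset V} :
    A ∈ (genBy S).faces ↔ ∃ G ∈ S, A ⊆ G := by
  simp [genBy]

lemma antichain_of_subset_facetSet {Δ : SimplicialComplex V} {S : Finset (Finset V)}
    (hS : S ⊆ Δ.facetSet) : ∀ F ∈ S, ∀ G ∈ S, F ⊆ G → F = G := by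
  intro F hF G hG hFG
  have hF' := hS hF
  have hG' := hS hG
  simp only [SimplicialComplex.facetSet, mem_filter] at hF' hG'
  exact hF'.2 G hG'.1 hFG

lemma facetSet_genBy {S : Finset (Finset V)}
    (hA : ∀ F ∈ S, ∀ G ∈ S, F ⊆ G → F = G) : (genBy S).facetSet = S := by
  ext F
  simp only [SimplicialComplex.facetSet, mem_filter]
  constructor
  · rintro ⟨hF, hmax⟩
    obtain ⟨G, hG, hFG⟩ := mem_genBy_faces.mp hF
    have : F = G := hmax G (mem_genBy_faces.mpr ⟨G, hG, le_refl _⟩) hFG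
    rwa [this]
  · intro hF
    refine ⟨mem_genBy_faces.mpr ⟨F, hF, le_refl _⟩, ?_⟩
    intro H hH hFH
    obtain ⟨G, hG, hHG⟩ := mem_genBy_faces.mp hH
    have hFG : F = G := hA F hF G hG (hFH.trans hHG)
    exact subset_antisymm hFH (hFG ▸ hHG)

/-! ### forward direction -/

lemma forest_no_Sk {Δ : SimplicialComplex V} (hf : Δ.IsForest) {S : Finset (Finset V)}
    (hS : S ⊆ Δ.facetSet) {k : ℕ} (hk : 3 ≤ k) : ¬ (genBy S).HasSk k := by
  rintro ⟨-, f, hinj, hadj, hfac⟩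
  haveI : NeZero k := ⟨by omega⟩
  have hanti := antichain_of_subset_facetSet hS
  rw [facetSet_genBy hanti] at hfac
  have hone := zmod_one_ne_zero (k := k) (by omega)
  have htwo := zmod_two_ne_zero (k := k) hk
  -- choose facets covering the edges
  have hedge : ∀ i : ZMod k, ∃ F ∈ S, ({f i, f (i+1)} : Finset V) ⊆ F := by
    intro i
    have : (genBy S).oneSkeleton.Adj (f i) (f (i+1)) := (hadj i (i+1)).mpr (Or.inr rfl)
    exact mem_genBy_faces.mp this.2
  choose M hMS hMsub using hedge
  have hfi : ∀ i, f i ∈ M i := fun i => hMsub i (by simp)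
  have hfi1 : ∀ i, f (i+1) ∈ M i := fun i => hMsub i (by simp)
  have key : ∀ i j : ZMod k, f j ∈ M i → j = i ∨ j = i + 1 := by
    intro i j hj
    have := hfac (M i) (hMS i) i (i+1) j (hfi i) (hfi1 i) hj
    rcases this with h | h | h
    · exact absurd h (by intro hh; exact hone (by simpa using (left_eq_add.mp hh)))
    · exact Or.inl h.symm
    · exact Or.inr h.symm
  have Minj : Function.Injective M := by
    intro i j hij
    rcases key i j (hij ▸ hfi j) with h | h
    · exact h.symm
    · rcases key i (j+1) (hij ▸ hfi1 j) with h2 | h2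
      · exfalso
        rw [h] at h2
        exact htwo (by linear_combination h2)
      · exfalso
        have hji : j = i := add_right_cancel h2
        rw [hji] at h
        exact hone (left_eq_add.mp h)
  -- the subcollection
  set T : Finset (Finset V) := Finset.image M Finset.univ with hT
  have hTS : T ⊆ Δ.facetSet := by
    intro F hF
    obtain ⟨i, -, rfl⟩ := mem_image.mp hF
    exact hS (hMS i)
  have hTcard : T.card = k := by
    rw [hT, Finset.card_image_of_injective _ Minj, Finset.card_univ, ZMod.card]
  obtain ⟨F₀, hF₀T, hcase⟩ := hf T hTS (by
    rw [← Finset.card_pos, hTcard]; omega)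
  obtain ⟨i, -, rfl⟩ := mem_image.mp hF₀T
  rcases hcase with h | ⟨Mb, hMbT, hMbne, hb⟩
  · have : T.card = 1 := by rw [h]; simp
    omega
  · obtain ⟨j, -, rfl⟩ := mem_image.mp hMbT
    have hji : j ≠ i := fun hh => hMbne (by rw [hh])
    have hMi1 : M (i-1) ≠ M i := by
      intro hh
      have := Minj hh
      exact hone (by simpa using sub_eq_self.mp this)
    have h1 : f i ∈ M j := by
      have hmem : f i ∈ M (i-1) ∩ M i := by
        refine mem_inter.mpr ⟨?_, hfi i⟩
        have := hfi1 (i-1)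
        rwa [sub_add_cancel] at this
      exact (mem_inter.mp (hb (M (i-1)) (mem_image.mpr ⟨i-1, mem_univ _, rfl⟩) hMi1 hmem)).1
    have hjieq : j = i - 1 := by
      rcases key j i h1 with h | h
      · exact absurd h.symm hji
      · rw [h]; ring
    have hMi2 : M (i+1) ≠ M i := by
      intro hh
      have := Minj hh
      exact hone (add_eq_left.mp this)
    have h2 : f (i+1) ∈ M j := by
      have hmem : f (i+1) ∈ M (i+1) ∩ M i := mem_inter.mpr ⟨hfi (i+1), hfi1 i⟩
      exact (mem_inter.mp (hb (M (i+1)) (mem_image.mpr ⟨i+1, mem_univ _, rfl⟩) hMi2 hmem)).1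
    rcases key j (i+1) h2 with h | h
    · rw [hjieq] at h
      exact htwo (by linear_combination h)
    · rw [hjieq] at h
      exact hone (by linear_combination h)

lemma forest_no_PkAux {Δ : SimplicialComplex V} (hf : Δ.IsForest) {S : Finset (Finset V)}
    (hS : S ⊆ Δ.facetSet) {k : ℕ} (hk : 3 ≤ k) : ¬ (genBy S).HasPkAux k := by
  rintro ⟨t, J, htJ, hcard, hfaces, hnot⟩
  have hpick : ∀ j ∈ J, ∃ F ∈ S, insert t (J.erase j) ⊆ F := by
    intro j hj
    exact mem_genBy_faces.mp (hfaces j hj)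
  choose! M hMS hMsub using hpick
  have key : ∀ j ∈ J, ∀ j' ∈ J, j' ≠ j → j' ∈ M j := by
    intro j hj j' hj' hne
    exact hMsub j hj (mem_insert.mpr (Or.inr (mem_erase.mpr ⟨hne, hj'⟩)))
  have hjnot : ∀ j ∈ J, j ∉ M j := by
    intro j hj hjmem
    apply hnot
    refine mem_genBy_faces.mpr ⟨M j, hMS j hj, ?_⟩
    intro x hx
    rcases mem_insert.mp hx with rfl | hxJ
    · exact hMsub j hj (mem_insert_self _ _)
    · by_cases hxj : x = j
      · exact hxj ▸ hjmem
      · exact key j hj x hxJ hxj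
  have MinjOn : ∀ j ∈ J, ∀ j' ∈ J, M j = M j' → j = j' := by
    intro j hj j' hj' heq
    by_contra hne
    have h1 : j ∈ M j' := key j' hj' j hj hne
    rw [← heq] at h1
    exact hjnot j hj h1
  set T : Finset (Finset V) := J.image M with hT
  have hTS : T ⊆ Δ.facetSet := by
    intro F hF
    obtain ⟨j, hj, rfl⟩ := mem_image.mp hF
    exact hS (hMS j hj)
  have hTcard : T.card = k := by
    rw [hT, Finset.card_image_of_injOn (fun a ha b hb hab => MinjOn a ha b hb hab), hcard]
  obtain ⟨F₀, hF₀T, hcase⟩ := hf T hTS (by rw [← Finset.card_pos, hTcard]; omega)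
  obtain ⟨j, hj, rfl⟩ := mem_image.mp hF₀T
  rcases hcase with h | ⟨Mb, hMbT, hMbne, hb⟩
  · have : T.card = 1 := by rw [h]; simp
    omega
  · obtain ⟨j', hj', rfl⟩ := mem_image.mp hMbT
    have hj'j : j' ≠ j := fun hh => hMbne (by rw [hh])
    -- find a third element
    have : ((J.erase j).erase j').Nonempty := by
      rw [← Finset.card_pos]
      have h1 : (J.erase j).card = k - 1 := by rw [Finset.card_erase_of_mem hj, hcard]
      have h2 : j' ∈ J.erase j := mem_erase.mpr ⟨hj'j, hj'⟩
      rw [Finset.card_erase_of_mem h2, h1]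
      omega
    obtain ⟨j'', hj''⟩ := this
    have hj''j' : j'' ≠ j' := (mem_erase.mp hj'').1
    have hj''j : j'' ≠ j := (mem_erase.mp (mem_erase.mp hj'').2).1
    have hj''J : j'' ∈ J := (mem_erase.mp (mem_erase.mp hj'').2).2
    have hMne : M j'' ≠ M j := fun hh => hj''j (MinjOn j'' hj''J j hj hh)
    have hsub := hb (M j'') (mem_image.mpr ⟨j'', hj''J, rfl⟩) hMne
    have hmem : j' ∈ M j'' ∩ M j :=
      mem_inter.mpr ⟨key j'' hj''J j' hj' (Ne.symm hj''j'), key j hj j' hj' hj'j⟩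
    exact hjnot j' hj' (mem_inter.mp (hsub hmem)).1

lemma hasPk_iff_aux {Δ : SimplicialComplex V} {k : ℕ} (hk : k ≠ 2) :
    Δ.HasPk k ↔ Δ.HasPkAux k := by
  rw [SimplicialComplex.HasPk, if_neg hk]

theorem forward_dir {Δ : SimplicialComplex V} (hf : Δ.IsForest) :
    ∀ S ⊆ Δ.facetSet, S.Nonempty →
      (∀ k : ℕ, 2 ≤ k → ¬ (genBy S).HasPk k) ∧
      (∀ k : ℕ, 3 ≤ k → ¬ (genBy S).HasSk k) := by
  intro S hS _
  constructor
  · intro k hk2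
    by_cases hk : k = 2
    · rw [hk, SimplicialComplex.HasPk, if_pos rfl]
      exact forest_no_Sk hf hS (le_refl 3)
    · rw [hasPk_iff_aux hk]
      exact forest_no_PkAux hf hS (by omega)
  · intro k hk3
    exact forest_no_Sk hf hS hk3

/-! ### graph infrastructure -/

def CliqueIn (G : SimpleGraph V) (U C : Finset V) : Prop :=
  C ⊆ U ∧ ∀ a ∈ C, ∀ b ∈ C, a ≠ b → G.Adj a b

open scoped Classical in
noncomputable def maxCliques (G : SimpleGraph V) (U : Finset V) : Finset (Finset V) :=
  U.powerset.filter (fun C => CliqueIn G U C ∧ ∀ D, CliqueIn G U D → C ⊆ D → C = D)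

lemma mem_maxCliques {G : SimpleGraph V} {U C : Finset V} :
    C ∈ maxCliques G U ↔ CliqueIn G U C ∧ ∀ D, CliqueIn G U D → C ⊆ D → C = D := by
  classical
  simp only [maxCliques, mem_filter, mem_powerset]
  constructor
  · rintro ⟨-, h⟩; exact h
  · rintro h; exact ⟨h.1.1, h⟩

lemma clique_extend {G : SimpleGraph V} {U C : Finset V} (hC : CliqueIn G U C) :
    ∃ D ∈ maxCliques G U, C ⊆ D := by
  classical
  set T := U.powerset.filter (fun D => CliqueIn G U D ∧ C ⊆ D) with hT
  have hCT : C ∈ T := by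
    simp only [hT, mem_filter, mem_powerset]
    exact ⟨hC.1, hC, le_refl _⟩
  obtain ⟨D, hDT, hDmax⟩ := Finset.exists_max_image T Finset.card ⟨C, hCT⟩
  simp only [hT, mem_filter, mem_powerset] at hDT
  refine ⟨D, mem_maxCliques.mpr ⟨hDT.2.1, ?_⟩, hDT.2.2⟩
  intro D' hD' hsub
  have hD'T : D' ∈ T := by
    simp only [hT, mem_filter, mem_powerset]
    exact ⟨hD'.1, hD', hDT.2.2.trans hsub⟩
  exact Finset.eq_of_subset_of_card_le hsub (hDmax D' hD'T)

lemma maxClique_nonempty {G : SimpleGraph V} {U C : Finset V} (hU : U.Nonempty)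
    (hC : C ∈ maxCliques G U) : C.Nonempty := by
  rw [mem_maxCliques] at hC
  obtain ⟨u, hu⟩ := hU
  rcases Finset.eq_empty_or_nonempty C with rfl | h
  · exfalso
    have : ({u} : Finset V) = ∅ := by
      refine (hC.2 {u} ⟨by simpa using hu, ?_⟩ (empty_subset _)).symm
      intro a ha b hb hab
      simp only [mem_singleton] at ha hb
      exact absurd (ha.trans hb.symm) hab
    simp at this
  · exact h

/-- single steps within a vertex set `W` -/
def Stp (G : SimpleGraph V) (W : Finset V) (u v : V) : Prop :=
  u ∈ W ∧ v ∈ W ∧ G.Adj u v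

def ReachIn (G : SimpleGraph V) (W : Finset V) : V → V → Prop :=
  Relation.ReflTransGen (Stp G W)

lemma stp_symm {G : SimpleGraph V} {W : Finset V} : Symmetric (Stp G W) := by
  rintro u v ⟨h1, h2, h3⟩; exact ⟨h2, h1, h3.symm⟩

lemma reachIn_symm {G : SimpleGraph V} {W : Finset V} {a b : V}
    (h : ReachIn G W a b) : ReachIn G W b a :=
  by haveI : Std.Symm (Stp G W) := ⟨stp_symm⟩; exact Relation.ReflTransGen.symmetric.symm _ _ h

lemma reachIn_trans {G : SimpleGraph V} {W : Finset V} {a b c : V}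
    (h1 : ReachIn G W a b) (h2 : ReachIn G W b c) : ReachIn G W a c := h1.trans h2

lemma reachIn_mono {G : SimpleGraph V} {W W' : Finset V} (hWW : W ⊆ W') {a b : V}
    (h : ReachIn G W a b) : ReachIn G W' a b := by
  induction h with
  | refl => exact Relation.ReflTransGen.refl
  | tail h1 h2 ih => exact ih.tail ⟨hWW h2.1, hWW h2.2.1, h2.2.2⟩

lemma reachIn_mem {G : SimpleGraph V} {W : Finset V} {a b : V}
    (h : ReachIn G W a b) (hab : a ≠ b) : a ∈ W ∧ b ∈ W := by
  induction h with
  | refl => exact absurd rfl hab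
  | tail h1 h2 ih =>
    rcases h1.cases_head with rfl | ⟨c, hc, -⟩
    · exact ⟨h2.1, h2.2.1⟩
    · exact ⟨hc.1, h2.2.1⟩

/-- if one can reach `b` in `W ∪ {x}` but not in `W`, then some vertex
reachable (in `W`) from `a` is adjacent to `x`. -/
lemma reach_insert_cases {G : SimpleGraph V} {W : Finset V} {x b : V} :
    ∀ {a : V}, ReachIn G (insert x W) a b → a ≠ x →
    ReachIn G W a b ∨ ∃ u, u ∈ W ∧ G.Adj u x ∧ ReachIn G W a u := by
  intro a h
  induction h using Relation.ReflTransGen.head_induction_on with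
  | refl => intro _; exact Or.inl Relation.ReflTransGen.refl
  | head h' hrest ih =>
    rename_i a' c
    intro ha'x
    by_cases hcx : c = x
    · subst hcx
      exact Or.inr ⟨a', Finset.mem_of_mem_insert_of_ne h'.1 ha'x, h'.2.2,
        Relation.ReflTransGen.refl⟩
    · have hcW : c ∈ W := Finset.mem_of_mem_insert_of_ne h'.2.1 hcx
      have ha'W : a' ∈ W := Finset.mem_of_mem_insert_of_ne h'.1 ha'x
      have step : Stp G W a' c := ⟨ha'W, hcW, h'.2.2⟩
      rcases ih hcx with h | ⟨u, h1, h2, h3⟩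
      · exact Or.inl (Relation.ReflTransGen.head step h)
      · exact Or.inr ⟨u, h1, h2, Relation.ReflTransGen.head step h3⟩


lemma reach_to_list {G : SimpleGraph V} {W : Finset V} {a b : V}
    (h : ReachIn G W a b) (haW : a ∈ W) :
    ∃ L : List V, L ≠ [] ∧ L.head? = some a ∧ L.getLast? = some b ∧
      L.Chain' G.Adj ∧ ∀ v ∈ L, v ∈ W ∧ ReachIn G W a v := by
  induction h with
  | refl =>
    refine ⟨[a], by simp, by simp, by simp, List.isChain_singleton a, ?_⟩
    intro v hv
    simp only [List.mem_singleton] at hv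
    subst hv
    exact ⟨haW, Relation.ReflTransGen.refl⟩
  | tail h1 h2 ih =>
    obtain ⟨L, hne, hhd, hlast, hchain, hmem⟩ := ih
    rename_i b' c
    refine ⟨L ++ [c], by simp, ?_, List.getLast?_concat, ?_, ?_⟩
    · rwa [List.head?_append_of_ne_nil _ hne]
    · simp only [List.Chain']; rw [List.isChain_append]
      refine ⟨hchain, by simp, ?_⟩
      intro u hu v hv
      simp only [List.head?_cons, Option.mem_some_iff] at hv
      rw [hlast] at hu
      simp only [Option.mem_some_iff] at hu
      subst hu; subst hv
      exact h2.2.2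
    · intro v hv
      rcases List.mem_append.mp hv with hv | hv
      · exact hmem v hv
      · simp only [List.mem_singleton] at hv
        subst hv
        exact ⟨h2.2.1, h1.tail h2⟩

def ChordFree (G : SimpleGraph V) (L : List V) : Prop :=
  ∀ i j (hi : i < L.length) (hj : j < L.length), i + 2 ≤ j → ¬ G.Adj L[i] L[j]

lemma chain'_splice {r : V → V → Prop} {L : List V} (h : L.Chain' r) {i j : ℕ}
    (hi : i < L.length) (hj : j < L.length) (hij : i + 1 ≤ j) (hadj : r L[i] L[j]) :
    (L.take (i+1) ++ L.drop j).Chain' r := by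
  simp only [List.Chain']; rw [List.isChain_append]
  refine ⟨h.take _, h.drop _, ?_⟩
  intro u hu v hv
  have h1 : (L.take (i+1)).getLast? = some L[i] := by
    rw [List.getLast?_eq_getElem?, List.getElem?_take]
    have hlen : (L.take (i+1)).length = i + 1 := by
      rw [List.length_take]; omega
    rw [hlen]
    simp only [Nat.add_sub_cancel, if_pos (Nat.lt_succ_self i)]
    exact List.getElem?_eq_getElem hi
  have h2 : (L.drop j).head? = some L[j] := by
    rw [List.head?_drop]
    exact List.getElem?_eq_getElem hj
  rw [h1] at hu; rw [h2] at hv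
  simp only [Option.mem_some_iff] at hu hv
  subst hu; subst hv
  exact hadj

lemma connector_min {G : SimpleGraph V} {B : Finset V} {x y : V}
    (hxy : x ≠ y) (hxB : x ∉ B) (hyB : y ∉ B) (hnadj : ¬ G.Adj x y)
    (hex : ∃ M : List V, (∀ v ∈ M, v ∈ B) ∧ (x :: M ++ [y]).Chain' G.Adj) :
    ∃ M : List V, (∀ v ∈ M, v ∈ B) ∧ (x :: M ++ [y]).Chain' G.Adj ∧ M ≠ [] ∧
      (x :: M ++ [y]).Nodup ∧ ChordFree G (x :: M ++ [y]) := by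
  classical
  have hexn : ∃ n, ∃ M : List V,
      ((∀ v ∈ M, v ∈ B) ∧ (x :: M ++ [y]).Chain' G.Adj) ∧ M.length = n :=
    ⟨hex.choose.length, hex.choose, hex.choose_spec, rfl⟩
  obtain ⟨M, ⟨hmem, hchain⟩, hlen⟩ := Nat.find_spec hexn
  have hmin : ∀ M' : List V, (∀ v ∈ M', v ∈ B) → (x :: M' ++ [y]).Chain' G.Adj →
      M.length ≤ M'.length := by
    intro M' h1 h2
    rw [hlen]
    exact Nat.find_min' hexn ⟨M', ⟨h1, h2⟩, rfl⟩
  clear hlen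
  have hLlen : (x :: M ++ [y]).length = M.length + 2 := by simp
  have hLmid : ∀ i (h : i < M.length) (h2 : i + 1 < (x :: M ++ [y]).length),
      (x :: M ++ [y])[i+1] = M[i] := by
    intro i h h2
    rw [List.getElem_append_left (show i + 1 < (x :: M).length by simp; omega)]
    simp
  have hchainAdj : ∀ i (h : i + 1 < (x :: M ++ [y]).length),
      G.Adj (x :: M ++ [y])[i] (x :: M ++ [y])[i+1] := by
    intro i h
    have := List.isChain_iff_getElem.mp hchain i (by omega)
    simpa using this
  -- the key splicing argument
  have build : ∀ i j (hi : i < (x :: M ++ [y]).length) (hj : j < (x :: M ++ [y]).length),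
      i + 1 < j → G.Adj (x :: M ++ [y])[i] (x :: M ++ [y])[j] → False := by
    intro i j hi hj hij hadj
    have hjs : j ≤ M.length + 1 := by omega
    have hsplice := chain'_splice hchain hi hj (by omega) hadj
    obtain ⟨j', rfl⟩ : ∃ j', j = j' + 1 := ⟨j - 1, by omega⟩
    have htake : (x :: M ++ [y]).take (i+1) = x :: M.take i := by
      rw [show (x :: M ++ [y]) = x :: (M ++ [y]) from rfl, List.take_succ_cons,
        List.take_append_of_le_length (by omega)]
    have hdrop : (x :: M ++ [y]).drop (j' + 1) = M.drop j' ++ [y] := by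
      rw [show (x :: M ++ [y]) = x :: (M ++ [y]) from rfl, List.drop_succ_cons,
        List.drop_append_of_le_length (by omega)]
    rw [htake, hdrop] at hsplice
    have hform : x :: M.take i ++ (M.drop j' ++ [y]) =
        x :: (M.take i ++ M.drop j') ++ [y] := by simp
    rw [hform] at hsplice
    have hmem' : ∀ v ∈ M.take i ++ M.drop j', v ∈ B := by
      intro v hv
      rcases List.mem_append.mp hv with hv | hv
      · exact hmem v (List.mem_of_mem_take hv)
      · exact hmem v (List.mem_of_mem_drop hv)
    have := hmin _ hmem' hsplice
    rw [List.length_append, List.length_take, List.length_drop] at this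
    omega
  have hMne : M ≠ [] := by
    intro hMnil
    apply hnadj
    rw [hMnil] at hchain
    exact List.isChain_pair.mp hchain
  refine ⟨M, hmem, hchain, hMne, ?_, ?_⟩
  · -- nodup
    have hMnd : M.Nodup := by
      by_contra hnd
      rw [List.nodup_iff_injective_get] at hnd
      rw [Function.not_injective_iff] at hnd
      obtain ⟨⟨p, hp⟩, ⟨q, hq⟩, heq, hne⟩ := hnd
      simp only [List.get_eq_getElem] at heq
      have hne' : p ≠ q := by simpa using hne
      rcases Nat.lt_or_ge p q with hpq | hpq
      · apply build (p+1) (q+2) (by simp; omega) (by simp; omega) (by omega)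
        rw [hLmid p (by omega) (by simp; omega), heq,
          ← hLmid q (by omega) (by simp; omega)]
        exact hchainAdj (q+1) (by simp; omega)
      · have hqp : q < p := by omega
        apply build (q+1) (p+2) (by simp; omega) (by simp; omega) (by omega)
        rw [hLmid q (by omega) (by simp; omega), ← heq,
          ← hLmid p (by omega) (by simp; omega)]
        exact hchainAdj (p+1) (by simp; omega)
    rw [List.nodup_append']
    refine ⟨?_, by simp, ?_⟩
    · rw [List.nodup_cons]
      exact ⟨fun hx => hxB (hmem x hx), hMnd⟩
    · intro v hv
      simp only [List.mem_singleton]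
      intro hvy
      subst hvy
      rcases List.mem_cons.mp hv with rfl | hv
      · exact hxy rfl
      · exact hyB (hmem v hv)
  · intro i j hi hj hij
    exact fun hadj => build i j hi hj (by omega) hadj

lemma getIdx {α : Type*} (l : List α) (m m' : ℕ) (hm : m < l.length) (hm' : m' < l.length)
    (h : m = m') : l[m] = l[m'] := by subst h; rfl

lemma induced_cycle_of_connectors {G : SimpleGraph V} {x y : V} {Ma Mb : List V}
    (h1 : (x :: Ma ++ [y]).Chain' G.Adj) (h2 : (y :: Mb ++ [x]).Chain' G.Adj)
    (hN1 : (x :: Ma ++ [y]).Nodup) (hN2 : (y :: Mb ++ [x]).Nodup)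
    (hC1 : ChordFree G (x :: Ma ++ [y])) (hC2 : ChordFree G (y :: Mb ++ [x]))
    (ha : Ma ≠ []) (hb : Mb ≠ [])
    (hcross : ∀ u ∈ Ma, ∀ v ∈ Mb, ¬ G.Adj u v ∧ u ≠ v) :
    G.HasInducedCycle (Ma.length + Mb.length + 2) := by
  set s := Ma.length with hsdef
  set t := Mb.length with htdef
  have hs1 : 1 ≤ s := by
    rcases Ma with _ | ⟨a, l⟩
    · exact absurd rfl ha
    · simp [hsdef]
  have ht1 : 1 ≤ t := by
    rcases Mb with _ | ⟨a, l⟩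
    · exact absurd rfl hb
    · simp [htdef]
  set k := s + t + 2 with hkdef
  set L : List V := (x :: Ma) ++ (y :: Mb) with hLdef
  have hk : L.length = k := by
    simp only [hLdef, hkdef, hsdef, htdef, List.length_append, List.length_cons]
    omega
  -- dictionaries
  have hL1len : (x :: Ma ++ [y]).length = s + 2 := by simp [hsdef]
  have hL2len : (y :: Mb ++ [x]).length = t + 2 := by simp [htdef]
  have d1 : ∀ m (hm : m < s + 2) (hm' : m < L.length),
      L[m] = (x :: Ma ++ [y])[m]'(by omega) := by
    intro m hm hm'
    rcases Nat.lt_or_ge m (s+1) with h | h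
    · rw [List.getElem_append_left (show m < (x :: Ma).length by simp only [List.length_cons, List.length_append, List.length_singleton]; omega),
        List.getElem_append_left (show m < (x :: Ma).length by simp only [List.length_cons, List.length_append, List.length_singleton]; omega)]
    · have hm2 : m = s + 1 := by omega
      subst hm2
      rw [List.getElem_append_right (show (x :: Ma).length ≤ s + 1 by simp only [List.length_cons]; omega),
        List.getElem_append_right (show (x :: Ma).length ≤ s + 1 by simp only [List.length_cons]; omega)]
      simp [hsdef]
  have d2 : ∀ m (hm : m < t + 1) (hm' : s + 1 + m < L.length),
      L[s + 1 + m] = (y :: Mb ++ [x])[m]'(by omega) := by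
    intro m hm hm'
    rw [List.getElem_append_right (show (x :: Ma).length ≤ s + 1 + m by simp only [List.length_cons, List.length_append, List.length_singleton]; omega),
      List.getElem_append_left (show m < (y :: Mb).length by simp only [List.length_cons, List.length_append, List.length_singleton]; omega)]
    congr 1
    simp [hsdef]
  have d2x : ∀ (hm' : 0 < L.length),
      L[0] = (y :: Mb ++ [x])[t + 1]'(by omega) := by
    intro hm'
    rw [List.getElem_append_left (show 0 < (x :: Ma).length by simp),
      List.getElem_append_right (show (y :: Mb).length ≤ t + 1 by simp only [List.length_cons]; omega)]
    simp [htdef]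
  -- nodup of the cycle list
  have hxy : x ≠ y := by
    intro hh
    exact (List.nodup_append'.mp hN1).2.2 (List.mem_cons_self (a := x) (l := Ma)) (by simp [hh])
  have hMay : ∀ u ∈ Ma, u ≠ y := by
    intro u hu hh
    exact (List.nodup_append'.mp hN1).2.2 (List.mem_cons_of_mem x hu) (by simp [hh])
  have hMbx : ∀ v ∈ Mb, v ≠ x := by
    intro v hv hh
    exact (List.nodup_append'.mp hN2).2.2 (List.mem_cons_of_mem y hv) (by simp [hh])
  have hxMa : x ∉ Ma := by
    have := (List.nodup_append'.mp hN1).1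
    rw [List.nodup_cons] at this
    exact this.1
  have hyMb : y ∉ Mb := by
    have := (List.nodup_append'.mp hN2).1
    rw [List.nodup_cons] at this
    exact this.1
  have hLnd : L.Nodup := by
    rw [hLdef, List.nodup_append']
    refine ⟨(List.nodup_append'.mp hN1).1, (List.nodup_append'.mp hN2).1, ?_⟩
    intro u hu hv
    rcases List.mem_cons.mp hu with rfl | hu
    · rcases List.mem_cons.mp hv with h | h
      · exact hxy h
      · exact hMbx _ h rfl
    · rcases List.mem_cons.mp hv with rfl | h
      · exact hMay _ hu rfl
      · exact (hcross _ hu _ h).2 rfl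
  -- chain facts
  have c1 : ∀ i (h : i + 1 < s + 2), G.Adj ((x :: Ma ++ [y])[i]'(by omega))
      ((x :: Ma ++ [y])[i+1]'(by omega)) := by
    intro i h
    have := List.isChain_iff_getElem.mp h1 i (by omega)
    simpa using this
  have c2 : ∀ i (h : i + 1 < t + 2), G.Adj ((y :: Mb ++ [x])[i]'(by omega))
      ((y :: Mb ++ [x])[i+1]'(by omega)) := by
    intro i h
    have := List.isChain_iff_getElem.mp h2 i (by omega)
    simpa using this
  have hkL : ∀ m, m < k → m < L.length := by intro m hm; omega
  -- consecutive adjacency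
  have A1 : ∀ m (h : m + 1 < k), G.Adj (L[m]'(by omega)) (L[m+1]'(by omega)) := by
    intro m h
    rcases Nat.lt_or_ge m (s+1) with hcase | hcase
    · rw [d1 m (by omega) (by omega), d1 (m+1) (by omega) (by omega)]
      exact c1 m (by omega)
    · obtain ⟨r, rfl⟩ : ∃ r, m = s + 1 + r := ⟨m - s - 1, by omega⟩
      rw [getIdx L (s+1+r+1) (s+1+(r+1)) (by omega) (by omega) (by omega),
        d2 r (by omega) (by omega), d2 (r+1) (by omega) (by omega)]
      exact c2 r (by omega)
  have Awrap : G.Adj (L[k-1]'(by omega)) (L[0]'(by omega)) := by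
    rw [getIdx L (k-1) (s+1+t) (by omega) (by omega) (by omega),
      d2 t (by omega) (by omega), d2x (by omega)]
    exact c2 t (by omega)
  -- membership facts
  have memA : ∀ m (h1m : 1 ≤ m) (h2m : m ≤ s) (hm' : m < L.length), L[m] ∈ Ma := by
    intro m h1m h2m hm'
    obtain ⟨r, rfl⟩ : ∃ r, m = r + 1 := ⟨m - 1, by omega⟩
    have : L[r+1] = Ma[r]'(by omega) := by
      rw [List.getElem_append_left (show r + 1 < (x :: Ma).length by
        simp only [List.length_cons]; omega)]
      exact List.getElem_cons_succ x Ma r (by simp only [List.length_cons]; omega)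
    rw [this]
    exact List.getElem_mem _
  have memB : ∀ n (h1n : s + 2 ≤ n) (h2n : n < k) (hn' : n < L.length), L[n] ∈ Mb := by
    intro n h1n h2n hn'
    have : L[n] = Mb[n - s - 2]'(by omega) := by
      rw [List.getElem_append_right (show (x :: Ma).length ≤ n by
        simp only [List.length_cons]; omega)]
      rw [getIdx (y :: Mb) (n - (x :: Ma).length) ((n - s - 2) + 1)
        (by simp only [List.length_cons]; omega) (by simp only [List.length_cons]; omega)
        (by simp only [List.length_cons]; omega)]
      exact List.getElem_cons_succ y Mb (n - s - 2) (by simp only [List.length_cons]; omega)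
    rw [this]
    exact List.getElem_mem _
  -- non-adjacency
  have A2 : ∀ m n (hmn : m < n) (hn : n < k) (hcons : n ≠ m + 1)
      (hwrap : ¬ (m = 0 ∧ n = k - 1)), ¬ G.Adj (L[m]'(by omega)) (L[n]'(by omega)) := by
    intro m n hmn hn hcons hwrap
    rcases Nat.lt_or_ge n (s+2) with hcase | hcase
    · rw [d1 m (by omega) (by omega), d1 n (by omega) (by omega)]
      exact hC1 m n (by omega) (by omega) (by omega)
    · rcases Nat.lt_or_ge m (s+1) with hm2 | hm2
      · rcases Nat.eq_or_lt_of_le (Nat.zero_le m) with hm0 | hm0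
        · -- m = 0 : compare with x at the end of L2
          have hnk : n ≤ s + t := by
            rcases Nat.eq_or_lt_of_le (Nat.succ_le_of_lt hn) with h | h
            · exact absurd ⟨hm0.symm, by omega⟩ hwrap
            · omega
          subst hm0
          rw [d2x (by omega), getIdx L n (s + 1 + (n - s - 1)) (by omega) (by omega)
            (by omega), d2 (n - s - 1) (by omega) (by omega)]
          intro hadj
          exact hC2 (n - s - 1) (t + 1) (by omega) (by omega) (by omega) hadj.symm
        · -- 1 ≤ m ≤ s : cross pair
          have hu := memA m (by omega) (by omega) (by omega)
          have hv := memB n (by omega) (by omega) (by omega)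
          exact (hcross _ hu _ hv).1
      · -- both in the second part
        obtain ⟨p, rfl⟩ : ∃ p, m = s + 1 + p := ⟨m - s - 1, by omega⟩
        obtain ⟨q, hq⟩ : ∃ q, n = s + 1 + q := ⟨n - s - 1, by omega⟩
        subst hq
        rw [d2 p (by omega) (by omega), d2 q (by omega) (by omega)]
        exact hC2 p q (by omega) (by omega) (by omega)
  -- now build the cycle
  haveI : NeZero k := ⟨by omega⟩
  haveI : Fact (1 < k) := ⟨by omega⟩
  have hvadd : ∀ j : ZMod k, (j + 1).val = (j.val + 1) % k := by
    intro j
    rw [ZMod.val_add, ZMod.val_one]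
  have valinj : ∀ i j : ZMod k, i.val = j.val → i = j := fun _ _ h => ZMod.val_injective k h
  have getcongr : ∀ (m m' : ℕ) (hm : m < L.length) (hm' : m' < L.length), m = m' →
      L[m] = L[m'] := by
    intro m m' hm hm' h
    subst h
    rfl
  refine ⟨by omega, fun i : ZMod k => L[(ZMod.val i)]'(by rw [hk]; exact ZMod.val_lt i), ?_, ?_⟩
  · intro i j hij
    dsimp only at hij
    have h2 := List.nodup_iff_injective_get.mp hLnd
      (a₁ := ⟨i.val, by rw [hk]; exact ZMod.val_lt i⟩)
      (a₂ := ⟨j.val, by rw [hk]; exact ZMod.val_lt j⟩) (by simpa using hij)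
    exact valinj i j (by simpa using h2)
  · intro i j
    dsimp only
    have hm := ZMod.val_lt i
    have hn := ZMod.val_lt j
    constructor
    · intro hadj
      by_contra hcon
      push_neg at hcon
      obtain ⟨hc1, hc2⟩ := hcon
      have hv1 : i.val ≠ (j.val + 1) % k := by
        intro h
        exact hc1 (valinj _ _ (by rw [hvadd]; exact h))
      have hv2 : j.val ≠ (i.val + 1) % k := by
        intro h
        exact hc2 (valinj _ _ (by rw [hvadd]; exact h))
      rcases Nat.lt_trichotomy i.val j.val with ht | ht | ht
      · refine A2 i.val j.val ht hn ?_ ?_ hadj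
        · intro h; exact hv2 (by rw [h, Nat.mod_eq_of_lt (by omega)])
        · rintro ⟨h0, hk1⟩
          exact hv1 (by rw [h0, hk1, Nat.sub_add_cancel (show 1 ≤ k by omega), Nat.mod_self])
      · exact G.loopless.irrefl _ (by rw [valinj i j ht] at hadj; exact hadj)
      · refine A2 j.val i.val ht hm ?_ ?_ hadj.symm
        · intro h; exact hv1 (by rw [h, Nat.mod_eq_of_lt (by omega)])
        · rintro ⟨h0, hk1⟩
          exact hv2 (by rw [h0, hk1, Nat.sub_add_cancel (show 1 ≤ k by omega), Nat.mod_self])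
    · intro hor
      rcases hor with rfl | rfl
      · -- i = j + 1
        rcases Nat.lt_or_ge (j.val + 1) k with hlt | hge
        · have e : L[(ZMod.val (j+1))]'(by rw [hk]; exact ZMod.val_lt _) = L[j.val + 1]'(by omega) :=
            getcongr _ _ _ _ (by rw [hvadd]; exact Nat.mod_eq_of_lt hlt)
          rw [e]
          exact (A1 j.val (by omega)).symm
        · have hj : j.val = k - 1 := by omega
          have e : L[(ZMod.val (j+1))]'(by rw [hk]; exact ZMod.val_lt _) = L[0]'(by omega) :=
            getcongr _ _ _ _ (by
              rw [hvadd]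
              have hj' : ZMod.val j = k - 1 := by omega
              rw [hj', Nat.sub_add_cancel (show 1 ≤ k by omega), Nat.mod_self])
          have e2 : L[(ZMod.val j)]'(by rw [hk]; exact ZMod.val_lt _) = L[k-1]'(by omega) :=
            getcongr _ _ _ _ hj
          rw [e, e2]
          exact Awrap.symm
      · -- j = i + 1
        rcases Nat.lt_or_ge (i.val + 1) k with hlt | hge
        · have e : L[(ZMod.val (i+1))]'(by rw [hk]; exact ZMod.val_lt _) = L[i.val + 1]'(by omega) :=
            getcongr _ _ _ _ (by rw [hvadd]; exact Nat.mod_eq_of_lt hlt)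
          rw [e]
          exact A1 i.val (by omega)
        · have hi : i.val = k - 1 := by omega
          have e : L[(ZMod.val (i+1))]'(by rw [hk]; exact ZMod.val_lt _) = L[0]'(by omega) :=
            getcongr _ _ _ _ (by
              rw [hvadd]
              have hi' : ZMod.val i = k - 1 := by omega
              rw [hi', Nat.sub_add_cancel (show 1 ≤ k by omega), Nat.mod_self])
          have e2 : L[(ZMod.val i)]'(by rw [hk]; exact ZMod.val_lt _) = L[k-1]'(by omega) :=
            getcongr _ _ _ _ hi
          rw [e, e2]
          exact Awrap

open scoped Classical in
noncomputable def Comp (G : SimpleGraph V) (W : Finset V) (a : V) : Finset V :=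
  W.filter (ReachIn G W a)

lemma mem_Comp {G : SimpleGraph V} {W : Finset V} {a v : V} :
    v ∈ Comp G W a ↔ v ∈ W ∧ ReachIn G W a v := by
  classical
  simp [Comp]

/-- `v` is simplicial within `U` -/
def SimpIn (G : SimpleGraph V) (U : Finset V) (v : V) : Prop :=
  ∀ a ∈ U, ∀ b ∈ U, G.Adj v a → G.Adj v b → a ≠ b → G.Adj a b

lemma side_simp {G : SimpleGraph V} {U X : Finset V} {a b : V}
    (hXU : X ⊆ U) (haU : a ∈ U) (hbU : b ∈ U) (haX : a ∉ X) (hbX : b ∉ X)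
    (hsep : ¬ ReachIn G (U \ X) a b)
    (hXcl : ∀ x ∈ X, ∀ y ∈ X, x ≠ y → G.Adj x y)
    (IH : ∀ U' ⊂ U, U'.Nonempty →
      (∀ u ∈ U', ∀ v ∈ U', u ≠ v → G.Adj u v) ∨
      (∃ v ∈ U', ∃ w ∈ U', v ≠ w ∧ ¬ G.Adj v w ∧ SimpIn G U' v ∧ SimpIn G U' w)) :
    ∃ v ∈ Comp G (U \ X) a, SimpIn G U v := by
  have haW : a ∈ U \ X := mem_sdiff.mpr ⟨haU, haX⟩
  have haCa : a ∈ Comp G (U \ X) a := mem_Comp.mpr ⟨haW, Relation.ReflTransGen.refl⟩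
  have hCaU : Comp G (U \ X) a ⊆ U := fun v hv => (mem_sdiff.mp (mem_Comp.mp hv).1).1
  have hbCa : b ∉ Comp G (U \ X) a := by
    intro h
    exact hsep (mem_Comp.mp h).2
  have hU₁U : Comp G (U \ X) a ∪ X ⊆ U := union_subset hCaU hXU
  have hss : Comp G (U \ X) a ∪ X ⊂ U := by
    refine Finset.ssubset_iff_of_subset hU₁U |>.mpr ⟨b, hbU, ?_⟩
    intro h
    rcases mem_union.mp h with h | h
    · exact hbCa h
    · exact hbX h
  have closure : ∀ v ∈ Comp G (U \ X) a, ∀ u ∈ U, G.Adj v u →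
      u ∈ Comp G (U \ X) a ∪ X := by
    intro v hv u hu hadj
    by_cases huX : u ∈ X
    · exact mem_union_right _ huX
    · refine mem_union_left _ (mem_Comp.mpr ⟨mem_sdiff.mpr ⟨hu, huX⟩, ?_⟩)
      exact (mem_Comp.mp hv).2.tail ⟨(mem_Comp.mp hv).1, mem_sdiff.mpr ⟨hu, huX⟩, hadj⟩
  have lift : ∀ v ∈ Comp G (U \ X) a, SimpIn G (Comp G (U \ X) a ∪ X) v → SimpIn G U v := by
    intro v hv hsimp a' ha' b' hb' h1 h2 hne
    exact hsimp a' (closure v hv a' ha' h1) b' (closure v hv b' hb' h2) h1 h2 hne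
  rcases IH _ hss ⟨a, mem_union_left _ haCa⟩ with hcomp | ⟨v, hv, w, hw, hvw, hnadj, sv, sw⟩
  · exact ⟨a, haCa, lift a haCa (fun a' ha' b' hb' _ _ hne => hcomp a' ha' b' hb' hne)⟩
  · by_cases hvCa : v ∈ Comp G (U \ X) a
    · exact ⟨v, hvCa, lift v hvCa sv⟩
    · have hvX : v ∈ X := (mem_union.mp hv).resolve_left hvCa
      have hwCa : w ∈ Comp G (U \ X) a := by
        rcases mem_union.mp hw with h | h
        · exact h
        · exact absurd (hXcl v hvX w h hvw) hnadj
      exact ⟨w, hwCa, lift w hwCa sw⟩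

lemma dirac {G : SimpleGraph V} (Hc : ∀ k, 4 ≤ k → ¬ G.HasInducedCycle k) :
    ∀ U : Finset V, U.Nonempty →
      (∀ u ∈ U, ∀ v ∈ U, u ≠ v → G.Adj u v) ∨
      (∃ v ∈ U, ∃ w ∈ U, v ≠ w ∧ ¬ G.Adj v w ∧ SimpIn G U v ∧ SimpIn G U w) := by
  classical
  intro U
  induction U using Finset.strongInduction with
  | _ U IH =>
  intro hU
  by_cases hcomp : ∀ u ∈ U, ∀ v ∈ U, u ≠ v → G.Adj u v
  · exact Or.inl hcomp
  · push_neg at hcomp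
    obtain ⟨a, haU, b, hbU, hab, hnadj⟩ := hcomp
    -- find a minimal separator X
    have hSep0 : a ∉ (U.erase a).erase b ∧ b ∉ (U.erase a).erase b ∧
        ¬ ReachIn G (U \ (U.erase a).erase b) a b := by
      refine ⟨fun h => (mem_erase.mp (mem_erase.mp h).2).1 rfl,
        fun h => (mem_erase.mp h).1 rfl, ?_⟩
      intro h
      rcases h.cases_head with h | ⟨c, hstep, -⟩
      · exact hab h
      · have hc : c ∈ U \ (U.erase a).erase b := hstep.2.1
        rw [mem_sdiff] at hc
        have : c = a ∨ c = b := by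
          by_contra hcc
          push_neg at hcc
          exact hc.2 (mem_erase.mpr ⟨hcc.2, mem_erase.mpr ⟨hcc.1, hc.1⟩⟩)
        rcases this with rfl | rfl
        · exact G.loopless.irrefl c hstep.2.2
        · exact hnadj hstep.2.2
    obtain ⟨X, hXmem, hXmin⟩ := Finset.exists_min_image
      ((U.powerset).filter (fun D => a ∉ D ∧ b ∉ D ∧ ¬ ReachIn G (U \ D) a b))
      Finset.card
      ⟨(U.erase a).erase b, mem_filter.mpr
        ⟨mem_powerset.mpr ((erase_subset _ _).trans (erase_subset _ _)), hSep0⟩⟩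
    rw [mem_filter, mem_powerset] at hXmem
    obtain ⟨hXU, haX, hbX, hsepX⟩ := hXmem
    have haW : a ∈ U \ X := mem_sdiff.mpr ⟨haU, haX⟩
    have hbW : b ∈ U \ X := mem_sdiff.mpr ⟨hbU, hbX⟩
    -- minimality consequence
    have hminz : ∀ z ∈ X, ReachIn G (U \ (X.erase z)) a b := by
      intro z hz
      by_contra h
      have hmem : X.erase z ∈ (U.powerset).filter
          (fun D => a ∉ D ∧ b ∉ D ∧ ¬ ReachIn G (U \ D) a b) := by
        rw [mem_filter, mem_powerset]
        exact ⟨(erase_subset _ _).trans hXU,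
          fun hh => haX (mem_of_mem_erase hh), fun hh => hbX (mem_of_mem_erase hh), h⟩
      have := hXmin _ hmem
      rw [card_erase_of_mem hz] at this
      have hpos : 0 < X.card := card_pos.mpr ⟨z, hz⟩
      omega
    -- neighbors in both components
    have hUrw : ∀ z ∈ X, U \ (X.erase z) = insert z (U \ X) := by
      intro z hz
      ext v
      simp only [mem_sdiff, mem_insert, mem_erase]
      constructor
      · rintro ⟨hvU, hv⟩
        by_cases hvz : v = z
        · exact Or.inl hvz
        · exact Or.inr ⟨hvU, fun hvX => hv ⟨hvz, hvX⟩⟩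
      · rintro (rfl | ⟨hvU, hvX⟩)
        · exact ⟨hXU hz, fun hh => hh.1 rfl⟩
        · exact ⟨hvU, fun hh => hvX hh.2⟩
    have hnbrA : ∀ z ∈ X, ∃ u, u ∈ Comp G (U \ X) a ∧ G.Adj u z := by
      intro z hz
      have hr := hminz z hz
      rw [hUrw z hz] at hr
      have hzW : z ∉ U \ X := fun hh => (mem_sdiff.mp hh).2 hz
      rcases reach_insert_cases hr (fun h => haX (h ▸ hz)) with
        h | ⟨u, huW, hadj, hru⟩
      · exact absurd h hsepX
      · exact ⟨u, mem_Comp.mpr ⟨huW, hru⟩, hadj⟩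
    have hnbrB : ∀ z ∈ X, ∃ u, u ∈ Comp G (U \ X) b ∧ G.Adj u z := by
      intro z hz
      have hr := reachIn_symm (hminz z hz)
      rw [hUrw z hz] at hr
      rcases reach_insert_cases hr (fun h => hbX (h ▸ hz)) with
        h | ⟨u, huW, hadj, hru⟩
      · exact absurd (reachIn_symm h) hsepX
      · exact ⟨u, mem_Comp.mpr ⟨huW, hru⟩, hadj⟩
    -- components are disjoint and mutually non-adjacent
    have hdisj : ∀ v, v ∈ Comp G (U \ X) a → v ∈ Comp G (U \ X) b → False := by
      intro v hva hvb
      exact hsepX ((mem_Comp.mp hva).2.trans (reachIn_symm (mem_Comp.mp hvb).2))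
    have hcrossAdj : ∀ v ∈ Comp G (U \ X) a, ∀ w ∈ Comp G (U \ X) b, ¬ G.Adj v w := by
      intro v hv w hw hadj
      apply hsepX
      refine ((mem_Comp.mp hv).2.tail ⟨(mem_Comp.mp hv).1, (mem_Comp.mp hw).1, hadj⟩).trans
        (reachIn_symm (mem_Comp.mp hw).2)
    -- the separator is a clique
    have hXcl : ∀ x ∈ X, ∀ y ∈ X, x ≠ y → G.Adj x y := by
      intro x hx y hy hxy
      by_contra hnadjxy
      have hxW : x ∉ U \ X := fun hh => (mem_sdiff.mp hh).2 hx
      have hyW : y ∉ U \ X := fun hh => (mem_sdiff.mp hh).2 hy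
      have hxCa : x ∉ Comp G (U \ X) a := fun hh => hxW (mem_Comp.mp hh).1
      have hyCa : y ∉ Comp G (U \ X) a := fun hh => hyW (mem_Comp.mp hh).1
      have hxCb : x ∉ Comp G (U \ X) b := fun hh => hxW (mem_Comp.mp hh).1
      have hyCb : y ∉ Comp G (U \ X) b := fun hh => hyW (mem_Comp.mp hh).1
      -- connectors through either side
      have hconn : ∀ (c p q : V),
          (∃ u, u ∈ Comp G (U \ X) c ∧ G.Adj u p) →
          (∃ u', u' ∈ Comp G (U \ X) c ∧ G.Adj u' q) →
          ∃ M : List V, (∀ v ∈ M, v ∈ Comp G (U \ X) c) ∧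
            (p :: M ++ [q]).Chain' G.Adj := by
        rintro c p q ⟨u, huC, hux⟩ ⟨u', hu'C, hu'y⟩
        have hru : ReachIn G (U \ X) u u' :=
          (reachIn_symm (mem_Comp.mp huC).2).trans (mem_Comp.mp hu'C).2
        obtain ⟨L, hLne, hLhd, hLlast, hLchain, hLmem⟩ :=
          reach_to_list hru (mem_Comp.mp huC).1
        refine ⟨L, ?_, ?_⟩
        · intro v hv
          exact mem_Comp.mpr ⟨(hLmem v hv).1, (mem_Comp.mp huC).2.trans (hLmem v hv).2⟩
        · rw [show (p :: L ++ [q]) = (p :: L) ++ [q] from rfl, List.Chain', List.isChain_append]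
          refine ⟨?_, by simp, ?_⟩
          · rw [List.isChain_cons]
            refine ⟨?_, hLchain⟩
            intro z hz
            rw [hLhd] at hz
            simp only [Option.mem_some_iff] at hz
            subst hz
            exact hux.symm
          · intro r hr q' hq'
            simp only [List.head?_cons, Option.mem_some_iff] at hq'
            subst hq'
            have hgl : (p :: L).getLast? = some u' := by
              rcases L with _ | ⟨d, l⟩
              · exact absurd rfl hLne
              · rw [List.getLast?_cons_cons]
                exact hLlast
            rw [hgl] at hr
            simp only [Option.mem_some_iff] at hr
            subst hr
            exact hu'y
      obtain ⟨Ma, hMaC, hchA, hMane, hndA, hcfA⟩ := connector_min hxy hxCa hyCa hnadjxy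
        (hconn a x y (hnbrA x hx) (hnbrA y hy))
      obtain ⟨Mb, hMbC, hchB, hMbne, hndB, hcfB⟩ := connector_min (Ne.symm hxy) hyCb hxCb
        (fun h => hnadjxy h.symm) (hconn b y x (hnbrB y hy) (hnbrB x hx))
      have hcross : ∀ u ∈ Ma, ∀ v ∈ Mb, ¬ G.Adj u v ∧ u ≠ v := by
        intro u hu v hv
        refine ⟨hcrossAdj u (hMaC u hu) v (hMbC v hv), ?_⟩
        intro hh
        exact hdisj u (hMaC u hu) (hh ▸ hMbC v hv)
      have h4 : 4 ≤ Ma.length + Mb.length + 2 := by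
        have := List.length_pos_iff.mpr hMane
        have := List.length_pos_iff.mpr hMbne
        omega
      exact Hc _ h4
        (induced_cycle_of_connectors hchA hchB hndA hndB hcfA hcfB hMane hMbne hcross)
    -- apply the side lemma on both sides
    obtain ⟨v₁, hv₁, hs₁⟩ := side_simp hXU haU hbU haX hbX hsepX hXcl IH
    obtain ⟨v₂, hv₂, hs₂⟩ := side_simp hXU hbU haU hbX haX
      (fun h => hsepX (reachIn_symm h)) hXcl IH
    refine Or.inr ⟨v₁, (mem_sdiff.mp (mem_Comp.mp hv₁).1).1,
      v₂, (mem_sdiff.mp (mem_Comp.mp hv₂).1).1, ?_, ?_, hs₁, hs₂⟩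
    · intro h
      exact hdisj v₁ hv₁ (h ▸ hv₂)
    · exact hcrossAdj v₁ hv₁ v₂ hv₂

lemma dirac_simp {G : SimpleGraph V} (Hc : ∀ k, 4 ≤ k → ¬ G.HasInducedCycle k)
    {U : Finset V} (hU : U.Nonempty) : ∃ v ∈ U, SimpIn G U v := by
  rcases dirac Hc U hU with h | ⟨v, hv, -, -, -, -, hs, -⟩
  · obtain ⟨u, hu⟩ := hU
    exact ⟨u, hu, fun a ha b hb _ _ hne => h a ha b hb hne⟩
  · exact ⟨v, hv, hs⟩

lemma chordal_leaf {G : SimpleGraph V} (Hc : ∀ k, 4 ≤ k → ¬ G.HasInducedCycle k) :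
    ∀ U : Finset V, U.Nonempty → ∃ F, IsLeafOf (maxCliques G U) F := by
  classical
  intro U
  induction U using Finset.strongInduction with
  | _ U IH =>
  intro hU
  obtain ⟨v, hvU, hsimp⟩ := dirac_simp Hc hU
  set F : Finset V := U.filter (fun u => u = v ∨ G.Adj v u) with hFdef
  have hvF : v ∈ F := by simp [hFdef, hvU]
  have hFU : F ⊆ U := filter_subset _ _
  have hmemF : ∀ u, u ∈ F ↔ u ∈ U ∧ (u = v ∨ G.Adj v u) := by
    intro u; simp [hFdef]
  have hFcl : CliqueIn G U F := by
    refine ⟨hFU, ?_⟩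
    intro p hp q hq hpq
    rcases (hmemF p).mp hp with ⟨hpU, rfl | hpv⟩
    · rcases (hmemF q).mp hq with ⟨hqU, rfl | hqv⟩
      · exact absurd rfl hpq
      · exact hqv
    · rcases (hmemF q).mp hq with ⟨hqU, rfl | hqv⟩
      · exact hpv.symm
      · exact hsimp p hpU q hqU hpv hqv hpq
  have hsubF : ∀ D, CliqueIn G U D → v ∈ D → D ⊆ F := by
    intro D hD hvD d hd
    by_cases hdv : d = v
    · exact (hmemF d).mpr ⟨hD.1 hd, Or.inl hdv⟩
    · exact (hmemF d).mpr ⟨hD.1 hd, Or.inr (hD.2 v hvD d hd (Ne.symm hdv))⟩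
  have hFmax : F ∈ maxCliques G U := by
    rw [mem_maxCliques]
    exact ⟨hFcl, fun D hD hsub => subset_antisymm hsub (hsubF D hD (hsub hvF))⟩
  have hvN : ∀ N ∈ maxCliques G U, v ∈ N → N = F := by
    intro N hN hvNmem
    exact (mem_maxCliques.mp hN).2 F hFcl (hsubF N (mem_maxCliques.mp hN).1 hvNmem)
  by_cases hA : maxCliques G U = {F}
  · exact ⟨F, hFmax, Or.inl hA⟩
  by_cases hB : ∃ M ∈ maxCliques G U, M ≠ F ∧ F.erase v ⊆ M
  · obtain ⟨M, hMmc, hMne, hMsub⟩ := hB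
    refine ⟨F, hFmax, Or.inr ⟨M, hMmc, hMne, ?_⟩⟩
    intro N hN hNF w hw
    rw [mem_inter] at hw ⊢
    have hwv : w ≠ v := by
      rintro rfl
      exact hNF (hvN N hN hw.1)
    exact ⟨hMsub (mem_erase.mpr ⟨hwv, hw.2⟩), hw.2⟩
  -- recurse on U minus v
  push_neg at hB
  have hvnotN : ∀ N ∈ maxCliques G U, N ≠ F → v ∉ N :=
    fun N hN hne hv => hne (hvN N hN hv)
  have hexN : ∃ N ∈ maxCliques G U, N ≠ F := by
    by_contra h
    push_neg at h
    apply hA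
    apply subset_antisymm
    · intro N hN
      rw [mem_singleton]
      by_contra hne
      exact hne (h N hN)
    · simpa using hFmax
  have hU'ne : (U.erase v).Nonempty := by
    obtain ⟨N, hN, hNF⟩ := hexN
    obtain ⟨n, hn⟩ := maxClique_nonempty hU hN
    refine ⟨n, mem_erase.mpr ⟨?_, (mem_maxCliques.mp hN).1.1 hn⟩⟩
    rintro rfl
    exact hvnotN N hN hNF hn
  have hss : U.erase v ⊂ U := erase_ssubset hvU
  have hcl'cl : ∀ C, CliqueIn G (U.erase v) C → CliqueIn G U C :=
    fun C hC => ⟨hC.1.trans (erase_subset _ _), hC.2⟩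
  have hC2 : ∀ N ∈ maxCliques G U, N ≠ F → N ∈ maxCliques G (U.erase v) := by
    intro N hN hNF
    rw [mem_maxCliques]
    refine ⟨⟨?_, (mem_maxCliques.mp hN).1.2⟩, ?_⟩
    · intro n hn
      refine mem_erase.mpr ⟨?_, (mem_maxCliques.mp hN).1.1 hn⟩
      rintro rfl
      exact hvnotN N hN hNF hn
    · intro D hD hsub
      exact (mem_maxCliques.mp hN).2 D (hcl'cl D hD) hsub
  have hFecl' : CliqueIn G (U.erase v) (F.erase v) := by
    refine ⟨?_, ?_⟩
    · intro w hw
      exact mem_erase.mpr ⟨(mem_erase.mp hw).1, hFU (mem_erase.mp hw).2⟩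
    · intro p hp q hq hpq
      exact hFcl.2 p (mem_of_mem_erase hp) q (mem_of_mem_erase hq) hpq
  have hC1 : F.erase v ∈ maxCliques G (U.erase v) := by
    rw [mem_maxCliques]
    refine ⟨hFecl', ?_⟩
    intro D hD hsub
    obtain ⟨M₀, hM₀, hDM₀⟩ := clique_extend (hcl'cl D hD)
    by_cases hM₀F : M₀ = F
    · refine subset_antisymm hsub ?_
      intro d hd
      refine mem_erase.mpr ⟨?_, hM₀F ▸ hDM₀ hd⟩
      rintro rfl
      exact (mem_erase.mp (hD.1 hd)).1 rfl
    · exact absurd (hsub.trans hDM₀) (hB M₀ hM₀ hM₀F)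
  have hC3 : ∀ D ∈ maxCliques G (U.erase v), D = F.erase v ∨
      (D ∈ maxCliques G U ∧ D ≠ F) := by
    intro D hD
    obtain ⟨M₀, hM₀, hDM₀⟩ := clique_extend (hcl'cl D (mem_maxCliques.mp hD).1)
    by_cases hM₀F : M₀ = F
    · left
      refine (mem_maxCliques.mp hD).2 (F.erase v) hFecl' ?_
      intro d hd
      refine mem_erase.mpr ⟨?_, hM₀F ▸ hDM₀ hd⟩
      rintro rfl
      exact (mem_erase.mp ((mem_maxCliques.mp hD).1.1 hd)).1 rfl
    · have hvM₀ : v ∉ M₀ := hvnotN M₀ hM₀ hM₀F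
      have hM₀cl' : CliqueIn G (U.erase v) M₀ := by
        refine ⟨?_, (mem_maxCliques.mp hM₀).1.2⟩
        intro m hm
        refine mem_erase.mpr ⟨?_, (mem_maxCliques.mp hM₀).1.1 hm⟩
        rintro rfl
        exact hvM₀ hm
      have : D = M₀ := (mem_maxCliques.mp hD).2 M₀ hM₀cl' hDM₀
      right
      rw [this]
      exact ⟨hM₀, hM₀F⟩
  have hneFe : ∀ N ∈ maxCliques G U, N ≠ F → N ≠ F.erase v := by
    intro N hN hNF hh
    apply hNF
    have : N ⊆ F := hh ▸ erase_subset _ _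
    exact (mem_maxCliques.mp hN).2 F hFcl this
  obtain ⟨L, hLmc', hLcase⟩ := IH _ hss hU'ne
  by_cases hLF : L = F.erase v
  · -- F is a leaf of maxCliques G U
    subst hLF
    rcases hLcase with hsingle | ⟨M'', hM''mem, hM''ne, hM''b⟩
    · exfalso
      apply hA
      apply subset_antisymm
      · intro N hN
        rw [mem_singleton]
        by_contra hNF
        have := hC2 N hN hNF
        rw [hsingle, mem_singleton] at this
        exact hneFe N hN hNF this
      · simpa using hFmax
    · rcases hC3 M'' hM''mem with h | ⟨hM''mc, hM''F⟩
      · exact absurd h hM''ne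
      refine ⟨F, hFmax, Or.inr ⟨M'', hM''mc, hM''F, ?_⟩⟩
      intro N hN hNF w hw
      rw [mem_inter] at hw ⊢
      have hwv : w ≠ v := by
        rintro rfl
        exact hvnotN N hN hNF hw.1
      have hwNL : w ∈ N ∩ F.erase v :=
        mem_inter.mpr ⟨hw.1, mem_erase.mpr ⟨hwv, hw.2⟩⟩
      have := hM''b N (hC2 N hN hNF) (hneFe N hN hNF) hwNL
      exact ⟨(mem_inter.mp this).1, hw.2⟩
  · -- L itself is a leaf of maxCliques G U
    rcases hC3 L hLmc' with h | ⟨hLmc, hLF'⟩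
    · exact absurd h hLF
    have hvL : v ∉ L := hvnotN L hLmc hLF'
    rcases hLcase with hsingle | ⟨M'', hM''mem, hM''ne, hM''b⟩
    · exfalso
      apply hLF
      have := hC1
      rw [hsingle, mem_singleton] at this
      exact this.symm
    · set M : Finset V := if M'' = F.erase v then F else M'' with hMdef
      have hMmc : M ∈ maxCliques G U := by
        rw [hMdef]
        split
        · exact hFmax
        · rename_i hne''
          rcases hC3 M'' hM''mem with h | ⟨h, -⟩
          · exact absurd h hne''
          · exact h
      have hMneL : M ≠ L := by
        rw [hMdef]
        split
        · exact fun h => hLF' h.symm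
        · exact hM''ne
      have hM''M : M'' ⊆ M := by
        rw [hMdef]
        split
        · rename_i h
          rw [h]
          exact erase_subset _ _
        · exact subset_rfl
      refine ⟨L, hLmc, Or.inr ⟨M, hMmc, hMneL, ?_⟩⟩
      intro N hN hNL w hw
      rw [mem_inter] at hw ⊢
      by_cases hNF : N = F
      · subst hNF
        have hwv : w ≠ v := by rintro rfl; exact hvL hw.2
        have hwmem : w ∈ F.erase v ∩ L :=
          mem_inter.mpr ⟨mem_erase.mpr ⟨hwv, hw.1⟩, hw.2⟩
        have hFeL : F.erase v ≠ L := fun h => hLF h.symm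
        have := hM''b (F.erase v) hC1 hFeL hwmem
        exact ⟨hM''M (mem_inter.mp this).1, hw.2⟩
      · have := hM''b N (hC2 N hN hNF) hNL (mem_inter.mpr hw)
        exact ⟨hM''M (mem_inter.mp this).1, hw.2⟩

lemma zmod_three_ne_zero {k : ℕ} (h : 4 ≤ k) : (3 : ZMod k) ≠ 0 := by
  have := zmod_cast_ne_zero (k := k) (m := 3) (by omega) (by omega)
  simpa using this

lemma skeleton_adj {S : Finset (Finset V)} {a b : V} :
    (genBy S).oneSkeleton.Adj a b ↔ a ≠ b ∧ ∃ F ∈ S, a ∈ F ∧ b ∈ F := by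
  unfold SimplicialComplex.oneSkeleton
  simp only [mem_genBy_faces, insert_subset_iff, singleton_subset_iff]

lemma good_clique_closed {Δ : SimplicialComplex V} {S : Finset (Finset V)}
    (hS : S ⊆ Δ.facetSet) (hSne : S.Nonempty)
    (hP : ∀ k : ℕ, 2 ≤ k → ¬ (genBy S).HasPk k) :
    ∀ C : Finset V, (∀ v ∈ C, ∃ F ∈ S, v ∈ F) →
      (∀ a ∈ C, ∀ b ∈ C, a ≠ b → (genBy S).oneSkeleton.Adj a b) →
      C ∈ (genBy S).faces := by
  classical
  have hanti := antichain_of_subset_facetSet hS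
  intro C
  induction C using Finset.strongInduction with
  | _ C IH =>
  intro hvert hadj
  rcases Nat.lt_or_ge C.card 3 with hc3 | hc3
  · -- small cases
    by_cases h0 : C.card = 0
    · rw [Finset.card_eq_zero] at h0
      subst h0
      obtain ⟨F, hF⟩ := hSne
      exact mem_genBy_faces.mpr ⟨F, hF, empty_subset _⟩
    by_cases h1 : C.card = 1
    · rw [Finset.card_eq_one] at h1
      obtain ⟨v, rfl⟩ := h1
      obtain ⟨F, hF, hvF⟩ := hvert v (mem_singleton_self v)
      exact mem_genBy_faces.mpr ⟨F, hF, singleton_subset_iff.mpr hvF⟩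
    · have h2 : C.card = 2 := by omega
      rw [Finset.card_eq_two] at h2
      obtain ⟨a, b, hab, rfl⟩ := h2
      exact (hadj a (by simp) b (by simp) hab).2
  by_contra hnotface
  have hproper : ∀ D ⊂ C, D ∈ (genBy S).faces := by
    intro D hD
    exact IH D hD (fun v hv => hvert v (hD.1 hv))
      (fun a ha b hb hne => hadj a (hD.1 ha) b (hD.1 hb) hne)
  rcases Nat.lt_or_ge C.card 4 with hc4 | hc4
  · -- |C| = 3 : build an S₃, contradicting ¬ HasPk 2
    have hc : C.card = 3 := by omega
    apply hP 2 (le_refl 2)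
    rw [SimplicialComplex.HasPk, if_pos rfl]
    rw [Finset.card_eq_three] at hc
    obtain ⟨a, b, c, hab, hac, hbc, rfl⟩ := hc
    set f : ZMod 3 → V := fun i => if i = 0 then a else if i = 1 then b else c with hf
    have f0 : f 0 = a := by
      show (if (0 : ZMod 3) = 0 then a else if (0 : ZMod 3) = 1 then b else c) = a
      rw [if_pos rfl]
    have f1 : f 1 = b := by
      show (if (1 : ZMod 3) = 0 then a else if (1 : ZMod 3) = 1 then b else c) = b
      rw [if_neg (by decide), if_pos rfl]
    have f2 : f 2 = c := by
      show (if (2 : ZMod 3) = 0 then a else if (2 : ZMod 3) = 1 then b else c) = c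
      rw [if_neg (by decide), if_neg (by decide)]
    have hz : ∀ i : ZMod 3, i = 0 ∨ i = 1 ∨ i = 2 := by decide
    have fmem : ∀ i, f i ∈ ({a, b, c} : Finset V) := by
      intro i
      rcases hz i with rfl | rfl | rfl
      · rw [f0]; simp
      · rw [f1]; simp
      · rw [f2]; simp
    have fne : ∀ i j : ZMod 3, f i = f j → i = j := by
      have h01 : f 0 ≠ f 1 := by rw [f0, f1]; exact hab
      have h02 : f 0 ≠ f 2 := by rw [f0, f2]; exact hac
      have h12 : f 1 ≠ f 2 := by rw [f1, f2]; exact hbc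
      intro i j hij
      rcases hz i with rfl | rfl | rfl <;> rcases hz j with rfl | rfl | rfl
      · rfl
      · exact absurd hij h01
      · exact absurd hij h02
      · exact absurd hij.symm h01
      · rfl
      · exact absurd hij h12
      · exact absurd hij.symm h02
      · exact absurd hij.symm h12
      · rfl
    have dec1 : ∀ i j : ZMod 3, i ≠ j → (i = j + 1 ∨ j = i + 1) := by decide
    have dec2 : ∀ i : ZMod 3, ¬ (i = i + 1 ∨ i = i + 1) := by decide
    refine ⟨le_refl 3, f, fun i j hij => fne i j hij, ?_, ?_⟩
    · intro i j
      constructor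
      · intro hadj'
        have hij : i ≠ j := by
          rintro rfl
          exact (genBy S).oneSkeleton.loopless.irrefl _ hadj'
        exact dec1 i j hij
      · intro hor
        have hij : i ≠ j := by
          rintro rfl
          exact dec2 i hor
        exact hadj (f i) (fmem i) (f j) (fmem j) (fun h => hij (fne _ _ h))
    · intro F hF i j l hfi hfj hfl
      by_contra hcon
      push_neg at hcon
      obtain ⟨hij, hil, hjl⟩ := hcon
      rw [facetSet_genBy hanti] at hF
      have huniv : ({i, j, l} : Finset (ZMod 3)) = Finset.univ := by
        apply Finset.eq_univ_of_card
        rw [card_insert_of_notMem (by simp [hij, hil]),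
          card_insert_of_notMem (by simp [hjl]), card_singleton, ZMod.card]
      have hall : ∀ m : ZMod 3, f m ∈ F := by
        intro m
        have hm : m ∈ ({i, j, l} : Finset (ZMod 3)) := huniv ▸ mem_univ m
        rcases mem_insert.mp hm with rfl | hm
        · exact hfi
        rcases mem_insert.mp hm with rfl | hm
        · exact hfj
        · rw [mem_singleton] at hm; subst hm; exact hfl
      apply hnotface
      refine mem_genBy_faces.mpr ⟨F, hF, ?_⟩
      intro w hw
      rcases mem_insert.mp hw with rfl | hw
      · exact f0 ▸ hall 0
      rcases mem_insert.mp hw with rfl | hw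
      · exact f1 ▸ hall 1
      · rw [mem_singleton] at hw; subst hw; exact f2 ▸ hall 2
  · -- |C| ≥ 4 : build a P_{|C|-1}
    apply hP (C.card - 1) (by omega)
    rw [hasPk_iff_aux (by omega)]
    obtain ⟨t, htC⟩ := Finset.card_pos.mp (by omega : 0 < C.card)
    refine ⟨t, C.erase t, notMem_erase _ _, by rw [card_erase_of_mem htC], ?_, ?_⟩
    · intro j hj
      have hjC : j ∈ C := mem_of_mem_erase hj
      have hjt : j ≠ t := (mem_erase.mp hj).1
      have heq : insert t ((C.erase t).erase j) = C.erase j := by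
        rw [Finset.erase_right_comm]
        exact insert_erase (mem_erase.mpr ⟨Ne.symm hjt, htC⟩)
      rw [heq]
      exact hproper _ (erase_ssubset hjC)
    · rwa [insert_erase htC]

lemma good_chordal {Δ : SimplicialComplex V} {S : Finset (Finset V)}
    (hS : S ⊆ Δ.facetSet)
    (hSk : ∀ k : ℕ, 3 ≤ k → ¬ (genBy S).HasSk k) :
    ∀ k, 4 ≤ k → ¬ (genBy S).oneSkeleton.HasInducedCycle k := by
  rintro k hk ⟨-, f, finj, hiff⟩
  have hanti := antichain_of_subset_facetSet hS
  apply hSk k (by omega)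
  refine ⟨by omega, f, finj, hiff, ?_⟩
  intro F hF i j l hfi hfj hfl
  by_contra hcon
  push_neg at hcon
  obtain ⟨hij, hil, hjl⟩ := hcon
  rw [facetSet_genBy hanti] at hF
  have hFface : F ∈ (genBy S).faces := mem_genBy_faces.mpr ⟨F, hF, subset_rfl⟩
  have hone : (1 : ZMod k) ≠ 0 := zmod_one_ne_zero (by omega)
  have hthree : (3 : ZMod k) ≠ 0 := zmod_three_ne_zero hk
  have hpair : ∀ p q : V, p ∈ F → q ∈ F → p ≠ q →
      (genBy S).oneSkeleton.Adj p q := by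
    intro p q hp hq hpq
    refine ⟨hpq, ?_⟩
    exact (genBy S).down_closed F hFface _ (insert_subset_iff.mpr ⟨hp, singleton_subset_iff.mpr hq⟩)
  have e1 := (hiff i j).mp (hpair _ _ hfi hfj (finj.ne hij))
  have e2 := (hiff j l).mp (hpair _ _ hfj hfl (finj.ne hjl))
  have e3 := (hiff i l).mp (hpair _ _ hfi hfl (finj.ne hil))
  rcases e1 with e1 | e1 <;> rcases e2 with e2 | e2 <;> rcases e3 with e3 | e3
  · exact hone (by linear_combination e3 - e1 - e2)
  · exact hthree (by linear_combination - e1 - e2 - e3)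
  · exact hil (by linear_combination e1 - e2)
  · exact hil (by linear_combination e1 - e2)
  · exact hil (by linear_combination e2 - e1)
  · exact hil (by linear_combination e2 - e1)
  · exact hthree (by linear_combination - e1 - e2 - e3)
  · exact hone (by linear_combination e3 - e1 - e2)

theorem backward_dir {Δ : SimplicialComplex V}
    (h : ∀ S ⊆ Δ.facetSet, S.Nonempty →
      (∀ k : ℕ, 2 ≤ k → ¬ (genBy S).HasPk k) ∧
      (∀ k : ℕ, 3 ≤ k → ¬ (genBy S).HasSk k)) : Δ.IsForest := by
  intro S hS hSne
  obtain ⟨hPk, hSkk⟩ := h S hS hSne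
  have hanti := antichain_of_subset_facetSet hS
  by_cases hcard : S.card = 1
  · rw [Finset.card_eq_one] at hcard
    obtain ⟨F, rfl⟩ := hcard
    exact ⟨F, mem_singleton_self F, Or.inl rfl⟩
  · have hcard2 : 2 ≤ S.card := by
      have := Finset.card_pos.mpr hSne
      omega
    have hFne : ∀ F ∈ S, F.Nonempty := by
      intro F hF
      rcases Finset.eq_empty_or_nonempty F with rfl | hne
      · exfalso
        obtain ⟨a, ha, b, hb, hab⟩ := Finset.one_lt_card.mp hcard2
        have hex : ∃ F' ∈ S, F' ≠ (∅ : Finset V) := by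
          by_cases ha0 : a = ∅
          · exact ⟨b, hb, fun hh => hab (by rw [ha0, hh])⟩
          · exact ⟨a, ha, ha0⟩
        obtain ⟨F', hF', hne'⟩ := hex
        exact hne' (hanti ∅ hF F' hF' (empty_subset _)).symm
      · exact hne
    set G := (genBy S).oneSkeleton with hG
    set U := S.biUnion id with hU
    have hvertU : ∀ v ∈ U, ∃ F ∈ S, v ∈ F := by
      intro v hv
      simpa using Finset.mem_biUnion.mp hv
    have hUvert : ∀ F ∈ S, ∀ v ∈ F, v ∈ U := by
      intro F hF v hv
      exact Finset.mem_biUnion.mpr ⟨F, hF, hv⟩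
    have hUne : U.Nonempty := by
      obtain ⟨F, hF⟩ := hSne
      obtain ⟨v, hv⟩ := hFne F hF
      exact ⟨v, hUvert F hF v hv⟩
    have hclosed : ∀ C : Finset V, CliqueIn G U C → C ∈ (genBy S).faces := by
      intro C hC
      exact good_clique_closed hS hSne hPk C (fun v hv => hvertU v (hC.1 hv)) hC.2
    have hFclq : ∀ F ∈ S, CliqueIn G U F := by
      intro F hF
      refine ⟨fun v hv => hUvert F hF v hv, ?_⟩
      intro p hp q hq hpq
      exact skeleton_adj.mpr ⟨hpq, F, hF, hp, hq⟩
    have hmc : maxCliques G U = S := by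
      apply subset_antisymm
      · intro C hC
        obtain ⟨F, hF, hCF⟩ := mem_genBy_faces.mp (hclosed C (mem_maxCliques.mp hC).1)
        have : C = F := (mem_maxCliques.mp hC).2 F (hFclq F hF) hCF
        rwa [this]
      · intro F hF
        rw [mem_maxCliques]
        refine ⟨hFclq F hF, ?_⟩
        intro D hD hFD
        obtain ⟨F', hF', hDF'⟩ := mem_genBy_faces.mp (hclosed D hD)
        have hFF' : F = F' := hanti F hF F' hF' (hFD.trans hDF')
        exact subset_antisymm hFD (hFF' ▸ hDF')
    obtain ⟨F, hleaf⟩ := chordal_leaf (good_chordal hS hSkk) U hUne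
    rw [hmc] at hleaf
    exact ⟨F, hleaf⟩


/-- A simplicial complex is a forest iff no subcomplex generated by a
(nonempty) subset of its facets has a `P_k` or an `S_k`. -/
theorem stmt4 {V : Type*} [DecidableEq V] [Fintype V] (Δ : SimplicialComplex V) :
    Δ.IsForest ↔
      ∀ S ⊆ Δ.facetSet, S.Nonempty →
        (∀ k : ℕ, 2 ≤ k → ¬ (genBy S).HasPk k) ∧
        (∀ k : ℕ, 3 ≤ k → ¬ (genBy S).HasSk k) := by
  exact ⟨fun hf => forward_dir hf, fun h => backward_dir h⟩
end

section
/- The independence complex Ind(C_k) of the k-cycle graph is a quasi-forest if and only if k = 3 or k = 4. -/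
open Finset

variable {V : Type*} [DecidableEq V] [Fintype V]

/-- The cycle graph on `ZMod k`. -/
def cycleGraph (k : ℕ) : SimpleGraph (ZMod k) where
  Adj i j := i ≠ j ∧ (i = j + 1 ∨ j = i + 1)
  symm := by
    constructor
    intro i j ⟨hij, h⟩
    exact ⟨hij.symm, h.symm⟩
  loopless := by constructor; intro i ⟨h, _⟩; exact h rfl

instance (k : ℕ) : DecidableRel (cycleGraph k).Adj :=
  fun a b => inferInstanceAs (Decidable (a ≠ b ∧ (a = b + 1 ∨ b = a + 1)))


section Aux

lemma mem_facetSet_iff (Δ : SimplicialComplex V) (F : Finset V) :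
    F ∈ Δ.facetSet ↔ F ∈ Δ.faces ∧ ∀ G ∈ Δ.faces, F ⊆ G → F = G := by
  simp [SimplicialComplex.facetSet, Finset.mem_filter]

lemma exists_facet_above (Δ : SimplicialComplex V) {F : Finset V} (hF : F ∈ Δ.faces) :
    ∃ G ∈ Δ.facetSet, F ⊆ G := by
  classical
  obtain ⟨G, hG, hmax⟩ := (Δ.faces.filter (fun G => F ⊆ G)).exists_max_image
    Finset.card ⟨F, by simp [hF]⟩
  rw [Finset.mem_filter] at hG
  refine ⟨G, (mem_facetSet_iff Δ G).2 ⟨hG.1, ?_⟩, hG.2⟩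
  intro G' hG' hsub
  exact Finset.eq_of_subset_of_card_le hsub
    (hmax G' (Finset.mem_filter.2 ⟨hG', hG.2.trans hsub⟩))

lemma mem_indComplex_faces (G : SimpleGraph V) [DecidableRel G.Adj] (F : Finset V) :
    F ∈ (indComplex G).faces ↔ ∀ a ∈ F, ∀ b ∈ F, ¬ G.Adj a b := by
  simp [indComplex]

lemma two_facets (k : ℕ) [NeZero k] (hk5 : 5 ≤ k) {F : Finset (ZMod k)}
    (hF : F ∈ (indComplex (cycleGraph k)).facetSet) {v : ZMod k} (hv : v ∈ F) :
    ∃ N ∈ (indComplex (cycleGraph k)).facetSet, N ≠ F ∧ v ∈ N := by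
  have hnz : ∀ n : ℕ, 0 < n → n < k → (n : ZMod k) ≠ 0 := by
    intro n h1 h2 h
    rw [ZMod.natCast_eq_zero_iff] at h
    have := Nat.le_of_dvd h1 h
    omega
  have h1 : (1 : ZMod k) ≠ 0 := by
    have := hnz 1 one_pos (by omega); simpa using this
  have h2 : (2 : ZMod k) ≠ 0 := by
    have := hnz 2 (by omega) (by omega); simpa using this
  have h3 : (3 : ZMod k) ≠ 0 := by
    have := hnz 3 (by omega) (by omega); simpa using this
  have h4 : (4 : ZMod k) ≠ 0 := by
    have := hnz 4 (by omega) (by omega); simpa using this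
  have hFind : ∀ a ∈ F, ∀ b ∈ F, ¬ (cycleGraph k).Adj a b :=
    (mem_indComplex_faces _ F).1 ((mem_facetSet_iff _ F).1 hF).1
  -- choose w ∉ F with {v, w} independent
  have key : ∃ w, w ∉ F ∧ ¬ (cycleGraph k).Adj v w ∧ ¬ (cycleGraph k).Adj w v := by
    by_cases hc : v + 2 ∈ F
    · refine ⟨v + 3, ?_, ?_, ?_⟩
      · intro hmem
        refine hFind (v + 2) hc (v + 3) hmem ⟨?_, Or.inr (by ring)⟩
        intro h
        exact h1 (by linear_combination -h)
      · rintro ⟨hne, h | h⟩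
        · exact h4 (by linear_combination -h)
        · exact h2 (by linear_combination h)
      · rintro ⟨hne, h | h⟩
        · exact h2 (by linear_combination h)
        · exact h4 (by linear_combination -h)
    · refine ⟨v + 2, hc, ?_, ?_⟩
      · rintro ⟨hne, h | h⟩
        · exact h3 (by linear_combination -h)
        · exact h1 (by linear_combination h)
      · rintro ⟨hne, h | h⟩
        · exact h1 (by linear_combination h)
        · exact h3 (by linear_combination -h)
  obtain ⟨w, hwF, hvw, hwv⟩ := key
  have hpair : ({v, w} : Finset (ZMod k)) ∈ (indComplex (cycleGraph k)).faces := by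
    rw [mem_indComplex_faces]
    intro a ha b hb
    simp only [Finset.mem_insert, Finset.mem_singleton] at ha hb
    rcases ha with rfl | rfl <;> rcases hb with rfl | rfl
    · rintro ⟨hne, -⟩; exact hne rfl
    · exact hvw
    · exact hwv
    · rintro ⟨hne, -⟩; exact hne rfl
  obtain ⟨N, hN, hsub⟩ := exists_facet_above _ hpair
  refine ⟨N, hN, ?_, hsub (by simp)⟩
  intro h
  exact hwF (h ▸ hsub (by simp))

lemma not_qf (k : ℕ) [NeZero k] (hk5 : 5 ≤ k) :
    ¬ (indComplex (cycleGraph k)).IsQuasiForest := by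
  rintro ⟨l, hnd, hto, hleaf⟩
  have hempty : (∅ : Finset (ZMod k)) ∈ (indComplex (cycleGraph k)).faces := by
    rw [mem_indComplex_faces]; simp
  obtain ⟨G0, hG0, -⟩ := exists_facet_above _ hempty
  have hlne : l ≠ [] := by
    rintro rfl
    rw [← hto] at hG0
    simp at hG0
  have hlen : 0 < l.length := List.length_pos_iff.2 hlne
  have hi : l.length - 1 < l.length := by omega
  have hleaf' := hleaf (l.length - 1) hi
  have htake : l.take (l.length - 1 + 1) = l := by
    rw [show l.length - 1 + 1 = l.length by omega, List.take_length]
  rw [htake, hto] at hleaf'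
  obtain ⟨hFmem, hcase⟩ := hleaf'
  set F := l[l.length - 1] with hFdef
  have hFfacet := (mem_facetSet_iff _ F).1 hFmem
  -- F is nonempty
  have hsingle : ({(0 : ZMod k)} : Finset (ZMod k)) ∈ (indComplex (cycleGraph k)).faces := by
    rw [mem_indComplex_faces]
    intro a ha b hb
    simp only [Finset.mem_singleton] at ha hb
    subst ha; subst hb
    rintro ⟨hne, -⟩; exact hne rfl
  have hFne : F.Nonempty := by
    rcases F.eq_empty_or_nonempty with h | h
    · exfalso
      have := hFfacet.2 {0} hsingle (by simp [h])
      rw [h] at this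
      exact Finset.singleton_ne_empty 0 this.symm
    · exact h
  obtain ⟨v, hvF⟩ := hFne
  rcases hcase with heq | ⟨M, hM, hMne, hMbr⟩
  · obtain ⟨N, hN, hNne, -⟩ := two_facets k hk5 hFmem hvF
    rw [heq, Finset.mem_singleton] at hN
    exact hNne hN
  · have hsub : F ⊆ M := by
      intro u hu
      obtain ⟨N, hN, hNne, huN⟩ := two_facets k hk5 hFmem hu
      have := hMbr N hN hNne (Finset.mem_inter.mpr ⟨huN, hu⟩)
      exact (Finset.mem_inter.mp this).1
    have hMface := ((mem_facetSet_iff _ M).1 hM).1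
    exact hMne (hFfacet.2 M hMface hsub).symm

instance (𝒞 : Finset (Finset V)) (F : Finset V) : Decidable (IsLeafOf 𝒞 F) :=
  decidable_of_iff
    (F ∈ 𝒞 ∧ (𝒞 = {F} ∨ ∃ M ∈ 𝒞, M ≠ F ∧ ∀ N ∈ 𝒞, N ≠ F → N ∩ F ⊆ M ∩ F)) Iff.rfl

lemma qf3 : (indComplex (cycleGraph 3)).IsQuasiForest :=
  ⟨([{0}, {1}, {2}] : List (Finset (ZMod 3))), by decide, by decide, by decide⟩

lemma qf4 : (indComplex (cycleGraph 4)).IsQuasiForest :=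
  ⟨([{0, 2}, {1, 3}] : List (Finset (ZMod 4))), by decide, by decide, by decide⟩

end Aux

/-- `Ind(C_k)` is a quasi-forest iff `k = 3` or `k = 4`. -/
theorem stmt7 (k : ℕ) [NeZero k] (hk : 3 ≤ k) :
    (indComplex (cycleGraph k)).IsQuasiForest ↔ k = 3 ∨ k = 4 := by
  constructor
  · intro hqf
    by_contra hor
    push_neg at hor
    exact not_qf k (by omega) hqf
  · rintro (rfl | rfl)
    · exact qf3
    · exact qf4
end

section
/- If Δ is a quasi-forest simplicial complex arising as the independence complex of a graph G, and G has no induced 4-cycle, then Ind(G) is vertex decomposable. -/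
open Finset

variable {V : Type*} [DecidableEq V] [Fintype V]

/-- Deletion of a vertex. -/
def SimplicialComplex.delete (Δ : SimplicialComplex V) (v : V) :
    SimplicialComplex V where
  faces := Δ.faces.filter (fun F => v ∉ F)
  down_closed := by
    intro F hF H hH
    simp only [Finset.mem_filter] at *
    exact ⟨Δ.down_closed F hF.1 H hH, fun hv => hF.2 (hH hv)⟩

/-- The link of a vertex. -/
def SimplicialComplex.link (Δ : SimplicialComplex V) (v : V) :
    SimplicialComplex V where
  faces := Δ.faces.filter (fun F => v ∉ F ∧ insert v F ∈ Δ.faces)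
  down_closed := by
    intro F hF H hH
    simp only [Finset.mem_filter] at *
    refine ⟨Δ.down_closed F hF.1 H hH, fun hv => hF.2.1 (hH hv), ?_⟩
    exact Δ.down_closed _ hF.2.2 _ (Finset.insert_subset_insert v hH)

/-- Vertex decomposability. -/
inductive IsVertexDecomposable {V : Type*} [DecidableEq V] [Fintype V] :
    SimplicialComplex V → Prop
  | simplex (Δ : SimplicialComplex V) (F : Finset V)
      (h : Δ.faces = F.powerset) : IsVertexDecomposable Δ
  | step (Δ : SimplicialComplex V) (v : V)
      (hdel : IsVertexDecomposable (Δ.delete v))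
      (hlink : IsVertexDecomposable (Δ.link v))
      (hfac : ∀ F ∈ (Δ.link v).faces, F ∉ (Δ.delete v).facetSet) :
      IsVertexDecomposable Δ

/-! ### Auxiliary material for `stmt17` -/

section Stmt17Aux

theorem SimplicialComplex.ext' {Δ₁ Δ₂ : SimplicialComplex V}
    (h : Δ₁.faces = Δ₂.faces) : Δ₁ = Δ₂ := by
  cases Δ₁; cases Δ₂; simpa using h

theorem mem_facetSet' {Δ : SimplicialComplex V} {F : Finset V} :
    F ∈ Δ.facetSet ↔ F ∈ Δ.faces ∧ ∀ H ∈ Δ.faces, F ⊆ H → F = H := by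
  simp [SimplicialComplex.facetSet]

theorem exists_facet_superset (Δ : SimplicialComplex V) {F : Finset V}
    (hF : F ∈ Δ.faces) : ∃ N ∈ Δ.facetSet, F ⊆ N := by
  obtain ⟨N, hN, hmax⟩ : ∃ N ∈ Δ.faces.filter (fun X => F ⊆ X),
      ∀ x ∈ Δ.faces.filter (fun X => F ⊆ X), ¬ N < x := by
    obtain ⟨N, hN⟩ := Finset.exists_maximal (s := Δ.faces.filter (fun X => F ⊆ X)) ⟨F, by simp [hF]⟩
    exact ⟨N, hN.1, fun x hx hlt => lt_irrefl N (lt_of_lt_of_le hlt (hN.2 hx hlt.le))⟩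
  rw [Finset.mem_filter] at hN
  refine ⟨N, mem_facetSet'.mpr ⟨hN.1, ?_⟩, hN.2⟩
  intro H hH hNH
  by_contra hne
  exact hmax H (Finset.mem_filter.mpr ⟨hH, hN.2.trans hNH⟩)
    (Finset.ssubset_iff_subset_ne.mpr ⟨hNH, hne⟩)

variable (G : SimpleGraph V) [DecidableRel G.Adj]

/-- Independence complex restricted to vertex set `W`. -/
def indOn (W : Finset V) : SimplicialComplex V where
  faces := Finset.univ.filter (fun F => F ⊆ W ∧ ∀ a ∈ F, ∀ b ∈ F, ¬ G.Adj a b)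
  down_closed := by
    intro F hF H hH
    simp only [Finset.mem_filter, Finset.mem_univ, true_and] at *
    exact ⟨hH.trans hF.1, fun a ha b hb => hF.2 a (hH ha) b (hH hb)⟩

theorem mem_indOn {W F : Finset V} :
    F ∈ (indOn G W).faces ↔ F ⊆ W ∧ ∀ a ∈ F, ∀ b ∈ F, ¬ G.Adj a b := by
  simp [indOn]

/-- `v` is simplicial in the complement of `G` restricted to `S`:
its non-neighbors in `S` are pairwise non-adjacent. -/
def CoSimpIn (v : V) (S : Finset V) : Prop :=
  v ∈ S ∧ ∀ a ∈ S, ∀ b ∈ S, a ≠ v → b ≠ v → ¬G.Adj v a → ¬G.Adj v b →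
    a ≠ b → ¬G.Adj a b

theorem pair_mem_indOn {W : Finset V} {v a : V} (hv : v ∈ W) (ha : a ∈ W)
    (hna : ¬ G.Adj v a) : ({v, a} : Finset V) ∈ (indOn G W).faces := by
  rw [mem_indOn]
  refine ⟨by simp [Finset.insert_subset_iff, hv, ha], ?_⟩
  intro x hx y hy
  simp only [Finset.mem_insert, Finset.mem_singleton] at hx hy
  rcases hx with rfl | rfl <;> rcases hy with rfl | rfl
  · exact G.irrefl
  · exact hna
  · exact fun h => hna h.symm
  · exact G.irrefl

/-- Peeling the last leaf of the quasi-forest ordering. -/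
theorem peel {W : Finset V} (hW : W.Nonempty)
    (hq : (indOn G W).IsQuasiForest) :
    ∃ B : Finset V, B ⊆ W ∧ B.Nonempty ∧ (∀ v ∈ B, CoSimpIn G v W) ∧
      (indOn G (W \ B)).IsQuasiForest := by
  obtain ⟨l, hnd, htf, hleaf⟩ := hq
  have hemptyface : (∅ : Finset V) ∈ (indOn G W).faces := by
    rw [mem_indOn]; simp
  have hlne : l ≠ [] := by
    intro h
    obtain ⟨N, hN, -⟩ := exists_facet_superset (indOn G W) hemptyface
    rw [← htf, h] at hN
    simp at hN
  have hr : 0 < l.length := List.length_pos_iff.mpr hlne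
  have hL := hleaf (l.length - 1) (by omega)
  rw [Nat.sub_add_cancel hr, List.take_length] at hL
  set Fr := l[l.length - 1]'(by omega) with hFrdef
  have hFrmem : Fr ∈ l.toFinset := List.mem_toFinset.mpr (List.getElem_mem _)
  have hFrfacet : Fr ∈ (indOn G W).facetSet := htf ▸ hFrmem
  have hFrface : Fr ∈ (indOn G W).faces := (mem_facetSet'.mp hFrfacet).1
  have hFrW : Fr ⊆ W := ((mem_indOn G).mp hFrface).1
  have hFrind : ∀ a ∈ Fr, ∀ b ∈ Fr, ¬ G.Adj a b := ((mem_indOn G).mp hFrface).2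
  -- any non-neighbor pair {v, a} with v, a ∈ W lands in a facet
  have hfacet_of_pair : ∀ v ∈ W, ∀ a ∈ W, ¬ G.Adj v a →
      ∃ N ∈ (indOn G W).facetSet, v ∈ N ∧ a ∈ N := by
    intro v hv a ha hna
    obtain ⟨N, hN, hsub⟩ :=
      exists_facet_superset (indOn G W) (pair_mem_indOn G hv ha hna)
    exact ⟨N, hN, hsub (by simp), hsub (by simp)⟩
  rcases hL.2 with hsingle | ⟨M, hMl, hMne, hbr⟩
  · -- only one facet: W is independent
    have hfs : (indOn G W).facetSet = {Fr} := by rw [← htf, hsingle]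
    have hWFr : ∀ w ∈ W, w ∈ Fr := by
      intro w hw
      obtain ⟨N, hN, hwN, -⟩ := hfacet_of_pair w hw w hw G.irrefl
      rw [hfs, Finset.mem_singleton] at hN
      exact hN ▸ hwN
    have hWind : ∀ a ∈ W, ∀ b ∈ W, ¬ G.Adj a b := fun a ha b hb =>
      hFrind a (hWFr a ha) b (hWFr b hb)
    refine ⟨W, Finset.Subset.refl W, hW, ?_, ?_⟩
    · intro v hv
      exact ⟨hv, fun a ha b hb _ _ _ _ _ => hWind a ha b hb⟩
    · rw [Finset.sdiff_self]
      have hfaces : (indOn G (∅ : Finset V)).faces = {∅} := by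
        ext F
        rw [mem_indOn]
        simp only [Finset.subset_empty, Finset.mem_singleton]
        constructor
        · rintro ⟨h, -⟩; exact h
        · rintro rfl; exact ⟨rfl, by simp⟩
      have hfs0 : (indOn G (∅ : Finset V)).facetSet = {∅} := by
        ext F
        rw [mem_facetSet', hfaces]
        simp
      refine ⟨[∅], List.nodup_singleton _, by simp [hfs0], ?_⟩
      intro i h
      simp only [List.length_singleton] at h
      interval_cases i
      simp only [List.take, List.toFinset_cons, List.toFinset_nil, List.getElem_singleton]
      exact ⟨by simp, Or.inl rfl⟩
  · -- proper leaf with branch M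
    have hMfacet : M ∈ (indOn G W).facetSet := htf ▸ hMl
    have hMface : M ∈ (indOn G W).faces := (mem_facetSet'.mp hMfacet).1
    set B := Fr \ M with hBdef
    have hBW : B ⊆ W := fun x hx => hFrW (Finset.mem_sdiff.mp hx).1
    have hBne : B.Nonempty := by
      rw [hBdef, Finset.sdiff_nonempty]
      intro hsub
      exact hMne ((mem_facetSet'.mp hFrfacet).2 M hMface hsub).symm
    -- private vertices lie only in Fr
    have hpriv : ∀ v ∈ B, ∀ N ∈ (indOn G W).facetSet, v ∈ N → N = Fr := by
      intro v hv N hN hvN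
      by_contra hne
      have hNl : N ∈ l.toFinset := htf ▸ hN
      have := hbr N hNl hne (Finset.mem_inter.mpr ⟨hvN, (Finset.mem_sdiff.mp hv).1⟩)
      exact (Finset.mem_sdiff.mp hv).2 (Finset.mem_inter.mp this).1
    have hCS : ∀ v ∈ B, CoSimpIn G v W := by
      intro v hv
      have hvW : v ∈ W := hBW hv
      refine ⟨hvW, ?_⟩
      intro a ha b hb _ _ hva hvb _
      obtain ⟨N, hN, hvN, haN⟩ := hfacet_of_pair v hvW a ha hva
      obtain ⟨N', hN', hvN', hbN'⟩ := hfacet_of_pair v hvW b hb hvb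
      rw [hpriv v hv N hN hvN] at haN
      rw [hpriv v hv N' hN' hvN'] at hbN'
      exact hFrind a haN b hbN'
    -- facets other than Fr avoid B
    have havoid : ∀ N ∈ (indOn G W).facetSet, N ≠ Fr → N ⊆ W \ B := by
      intro N hN hne x hx
      refine Finset.mem_sdiff.mpr ⟨((mem_indOn G).mp (mem_facetSet'.mp hN).1).1 hx, ?_⟩
      intro hxB
      exact hne (hpriv x hxB N hN hx)
    have hmono : ∀ F, F ∈ (indOn G (W \ B)).faces → F ∈ (indOn G W).faces := by
      intro F hF
      rw [mem_indOn] at hF ⊢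
      exact ⟨hF.1.trans (Finset.sdiff_subset), hF.2⟩
    -- the facets of the peeled complex
    have key : ∀ S : Finset V,
        S ∈ (indOn G (W \ B)).facetSet ↔ S ∈ (indOn G W).facetSet ∧ S ≠ Fr := by
      intro S
      constructor
      · intro hS
        obtain ⟨hSf, hSmax⟩ := mem_facetSet'.mp hS
        obtain ⟨N, hN, hSN⟩ := exists_facet_superset (indOn G W) (hmono S hSf)
        rcases eq_or_ne N Fr with rfl | hneFr
        · -- S ⊆ Fr, but S avoids B so S ⊆ M
          have hSM : S ⊆ M := by
            intro x hx
            have hxW' : x ∈ W \ B := ((mem_indOn G).mp hSf).1 hx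
            have hxFr : x ∈ Fr := hSN hx
            by_contra hxM
            exact (Finset.mem_sdiff.mp hxW').2 (Finset.mem_sdiff.mpr ⟨hxFr, hxM⟩)
          have hMW' : M ∈ (indOn G (W \ B)).faces := by
            rw [mem_indOn]
            exact ⟨havoid M hMfacet hMne, ((mem_indOn G).mp hMface).2⟩
          have : S = M := hSmax M hMW' hSM
          exact ⟨this ▸ hMfacet, this ▸ hMne⟩
        · have hNW' : N ∈ (indOn G (W \ B)).faces := by
            rw [mem_indOn]
            exact ⟨havoid N hN hneFr, ((mem_indOn G).mp (mem_facetSet'.mp hN).1).2⟩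
          have : S = N := hSmax N hNW' hSN
          exact ⟨this ▸ hN, this ▸ hneFr⟩
      · rintro ⟨hS, hne⟩
        refine mem_facetSet'.mpr ⟨?_, ?_⟩
        · rw [mem_indOn]
          exact ⟨havoid S hS hne, ((mem_indOn G).mp (mem_facetSet'.mp hS).1).2⟩
        · intro H hH hSH
          exact (mem_facetSet'.mp hS).2 H (hmono H hH) hSH
    refine ⟨B, hBW, hBne, hCS, l.dropLast, hnd.sublist (List.dropLast_sublist l), ?_, ?_⟩
    · -- toFinset of dropLast
      have hsplit : l.dropLast ++ [Fr] = l := by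
        rw [hFrdef, ← List.getLast_eq_getElem hlne]
        exact List.dropLast_append_getLast hlne
      have hnd2 : (l.dropLast ++ [Fr]).Nodup := by rw [hsplit]; exact hnd
      have hFrnot : Fr ∉ l.dropLast := by
        intro h
        exact (List.nodup_append'.mp hnd2).2.2 h (by simp)
      have hmeml : ∀ S : Finset V, S ∈ l.toFinset ↔ S ∈ l.dropLast.toFinset ∨ S = Fr := by
        intro S
        conv_lhs => rw [← hsplit]
        simp [or_comm]
      ext S
      rw [key S, ← htf]
      constructor
      · intro h
        refine ⟨(hmeml S).mpr (Or.inl h), ?_⟩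
        rintro rfl
        exact hFrnot (List.mem_toFinset.mp h)
      · rintro ⟨h, hne⟩
        rcases (hmeml S).mp h with h' | h'
        · exact h'
        · exact absurd h' hne
    · -- leaf conditions
      intro i h
      have hlen : l.dropLast.length = l.length - 1 := List.length_dropLast
      have hi : i < l.length - 1 := by rwa [hlen] at h
      have hdt : l.dropLast = l.take (l.length - 1) := List.dropLast_eq_take
      have htake : l.dropLast.take (i + 1) = l.take (i + 1) := by
        rw [hdt, List.take_take]
        congr 1
        omega
      have hget : l.dropLast[i] = l[i]'(by omega) := List.getElem_dropLast ..
      rw [htake, hget]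
      exact hleaf i (by omega)

/-- Every nonempty subset has a co-simplicial vertex. -/
theorem cosimp_exists : ∀ W : Finset V, (indOn G W).IsQuasiForest →
    ∀ U ⊆ W, U.Nonempty → ∃ v ∈ U, CoSimpIn G v U := by
  intro W
  induction W using Finset.strongInduction with
  | _ W ih =>
    intro hq U hUW hU
    have hW : W.Nonempty := hU.mono hUW
    obtain ⟨B, hBW, hBne, hcs, hq'⟩ := peel G hW hq
    by_cases h : (U ∩ B).Nonempty
    · obtain ⟨v, hv⟩ := h
      rw [Finset.mem_inter] at hv
      have hWv := hcs v hv.2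
      refine ⟨v, hv.1, hv.1, ?_⟩
      intro a ha b hb
      exact hWv.2 a (hUW ha) b (hUW hb)
    · have hsub : U ⊆ W \ B := by
        intro x hx
        refine Finset.mem_sdiff.mpr ⟨hUW hx, fun hxB => h ⟨x, Finset.mem_inter.mpr ⟨hx, hxB⟩⟩⟩
      exact ih (W \ B) (Finset.sdiff_ssubset hBW hBne) hq' U hsub hU

/-- Build an induced 4-cycle. -/
theorem inducedC4 {v a x b : V} (hvx : v ≠ x) (hab : a ≠ b)
    (h1 : G.Adj v a) (h2 : G.Adj a x) (h3 : G.Adj x b) (h4 : G.Adj b v)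
    (n1 : ¬ G.Adj v x) (n2 : ¬ G.Adj a b) : G.HasInducedCycle 4 := by
  have hc : ∀ i : ZMod 4, i = 0 ∨ i = 1 ∨ i = 2 ∨ i = 3 := by decide
  refine ⟨by norm_num,
    fun i => if i = 0 then v else if i = 1 then a else if i = 2 then x else b, ?_, ?_⟩
  · intro i j hij
    rcases hc i with rfl | rfl | rfl | rfl <;> rcases hc j with rfl | rfl | rfl | rfl <;>
      simp only [if_pos, if_neg, reduceIte] at hij <;>
      first
        | rfl
        | exact absurd hij (by
            first
              | exact h1.ne | exact h1.ne' | exact h2.ne | exact h2.ne'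
              | exact h3.ne | exact h3.ne' | exact h4.ne | exact h4.ne'
              | exact hvx | exact hvx.symm | exact hab | exact hab.symm)
  · intro i j
    rcases hc i with rfl | rfl | rfl | rfl <;> rcases hc j with rfl | rfl | rfl | rfl <;>
      simp only [if_pos, if_neg, reduceIte] <;>
      first
        | exact iff_of_true (by
            first
              | exact h1 | exact h1.symm | exact h2 | exact h2.symm
              | exact h3 | exact h3.symm | exact h4 | exact h4.symm) (by decide)
        | exact iff_of_false (by
            first
              | exact n1 | exact fun h => n1 h.symm
              | exact n2 | exact fun h => n2 h.symm
              | exact G.irrefl) (by decide)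

/-- Existence of a simplicial vertex (with a neighbor) in `G[W]`. -/
theorem claimS (h4 : ¬ G.HasInducedCycle 4)
    (hcs : ∀ U : Finset V, U.Nonempty → ∃ v ∈ U, CoSimpIn G v U) :
    ∀ W : Finset V, (∃ a ∈ W, ∃ b ∈ W, G.Adj a b) →
      ∃ x ∈ W, ∃ u ∈ W, G.Adj x u ∧
        ∀ a ∈ W, ∀ b ∈ W, G.Adj x a → G.Adj x b → a ≠ b → G.Adj a b := by
  intro W
  induction W using Finset.strongInduction with
  | _ W ih =>
    rintro ⟨a0, ha0, b0, hb0, hab0⟩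
    obtain ⟨v, hvW, hvcs⟩ := hcs W ⟨a0, ha0⟩
    set A := W.filter (fun y => y ≠ v ∧ ¬ G.Adj v y) with hA
    by_cases hAnbr : ∃ x ∈ A, ∃ u ∈ W, G.Adj x u
    · obtain ⟨x, hxA, u, huW, hxu⟩ := hAnbr
      rw [hA, Finset.mem_filter] at hxA
      obtain ⟨hxW, hxv, hnvx⟩ := hxA
      refine ⟨x, hxW, u, huW, hxu, ?_⟩
      intro a ha b hb hxa hxb hne
      by_contra hnadj
      have hnbr : ∀ c ∈ W, G.Adj x c → G.Adj v c := by
        intro c hc hxc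
        by_contra hvc
        rcases eq_or_ne c v with rfl | hcv
        · exact hnvx hxc.symm
        · exact hvcs.2 c hc x hxW hcv hxv hvc hnvx hxc.ne' hxc.symm
      have hva : G.Adj v a := hnbr a ha hxa
      have hvb : G.Adj v b := hnbr b hb hxb
      exact h4 (inducedC4 G (fun h => hxv h.symm) hne hva hxa.symm hxb hvb.symm hnvx hnadj)
    · push_neg at hAnbr
      by_cases hAne : A.Nonempty
      · -- vertices of A are isolated in W; remove them
        have hAW : A ⊆ W := Finset.filter_subset _ _
        have hiso : ∀ x ∈ A, ∀ u ∈ W, ¬ G.Adj x u := hAnbr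
        have hW' : W \ A ⊂ W := Finset.sdiff_ssubset hAW hAne
        have ha0' : a0 ∈ W \ A := Finset.mem_sdiff.mpr
          ⟨ha0, fun h => hiso a0 h b0 hb0 hab0⟩
        have hb0' : b0 ∈ W \ A := Finset.mem_sdiff.mpr
          ⟨hb0, fun h => hiso b0 h a0 ha0 hab0.symm⟩
        obtain ⟨x, hxW', u, huW', hxu, hclq⟩ := ih (W \ A) hW' ⟨a0, ha0', b0, hb0', hab0⟩
        refine ⟨x, (Finset.mem_sdiff.mp hxW').1, u, (Finset.mem_sdiff.mp huW').1, hxu, ?_⟩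
        intro a ha b hb hxa hxb hne
        have haA : a ∈ W \ A := Finset.mem_sdiff.mpr
          ⟨ha, fun h => hiso a h x (Finset.mem_sdiff.mp hxW').1 hxa.symm⟩
        have hbA : b ∈ W \ A := Finset.mem_sdiff.mpr
          ⟨hb, fun h => hiso b h x (Finset.mem_sdiff.mp hxW').1 hxb.symm⟩
        exact hclq a haA b hbA hxa hxb hne
      · -- A empty: v dominates W
        have hdom : ∀ y ∈ W, y ≠ v → G.Adj v y := by
          intro y hy hne
          by_contra h
          exact hAne ⟨y, Finset.mem_filter.mpr ⟨hy, hne, h⟩⟩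
        by_cases hE' : ∃ a ∈ W.erase v, ∃ b ∈ W.erase v, G.Adj a b
        · obtain ⟨x, hxW', u, huW', hxu, hclq⟩ := ih (W.erase v)
            (Finset.erase_ssubset hvW) hE'
          refine ⟨x, Finset.mem_of_mem_erase hxW', u, Finset.mem_of_mem_erase huW', hxu, ?_⟩
          intro a ha b hb hxa hxb hne
          rcases eq_or_ne a v with rfl | hav
          · exact hdom b hb hne.symm
          rcases eq_or_ne b v with rfl | hbv
          · exact (hdom a ha hav).symm
          exact hclq a (Finset.mem_erase.mpr ⟨hav, ha⟩) b (Finset.mem_erase.mpr ⟨hbv, hb⟩)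
            hxa hxb hne
        · -- every edge of W touches v
          have htouch : ∀ a ∈ W, ∀ b ∈ W, G.Adj a b → a = v ∨ b = v := by
            intro a ha b hb hab
            by_contra h
            push_neg at h
            exact hE' ⟨a, Finset.mem_erase.mpr ⟨h.1, ha⟩, b,
              Finset.mem_erase.mpr ⟨h.2, hb⟩, hab⟩
          -- x := the endpoint of the edge a0b0 different from v
          have hkey : ∀ x ∈ W, x ≠ v →
              ∀ a ∈ W, ∀ b ∈ W, G.Adj x a → G.Adj x b → a ≠ b → G.Adj a b := by
            intro x hxW hxv a ha b hb hxa hxb hne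
            rcases htouch x hxW a ha hxa with h1 | h1
            · exact absurd h1 hxv
            rcases htouch x hxW b hb hxb with h2 | h2
            · exact absurd h2 hxv
            · exact absurd (h1.trans h2.symm) hne
          rcases htouch a0 ha0 b0 hb0 hab0 with h0 | h0
          · refine ⟨b0, hb0, a0, ha0, hab0.symm,
              hkey b0 hb0 (fun hh => hab0.ne' (hh.trans h0.symm))⟩
          · refine ⟨a0, ha0, b0, hb0, hab0,
              hkey a0 ha0 (fun hh => hab0.ne (hh.trans h0.symm))⟩

/-- Main induction: the restricted independence complex is vertex decomposable. -/
theorem vd_indOn (h4 : ¬ G.HasInducedCycle 4)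
    (hcs : ∀ U : Finset V, U.Nonempty → ∃ v ∈ U, CoSimpIn G v U) :
    ∀ W : Finset V, IsVertexDecomposable (indOn G W) := by
  intro W
  induction W using Finset.strongInduction with
  | _ W ih =>
    by_cases hE : ∃ a ∈ W, ∃ b ∈ W, G.Adj a b
    · obtain ⟨x, hxW, u, huW, hxu, hclq⟩ := claimS G h4 hcs W hE
      have hxune : x ≠ u := hxu.ne
      set Wu := (W.erase u).filter (fun y => ¬ G.Adj u y) with hWu
      have hWuW : Wu ⊆ W.erase u := Finset.filter_subset _ _
      have hdel : (indOn G W).delete u = indOn G (W.erase u) := by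
        apply SimplicialComplex.ext'
        ext F
        simp only [SimplicialComplex.delete, Finset.mem_filter, mem_indOn,
          Finset.subset_erase]
        tauto
      have hlink : (indOn G W).link u = indOn G Wu := by
        apply SimplicialComplex.ext'
        ext F
        simp only [SimplicialComplex.link, Finset.mem_filter, mem_indOn]
        constructor
        · rintro ⟨⟨hFW, hFind⟩, huF, hins, hindins⟩
          refine ⟨?_, hFind⟩
          intro y hy
          rw [hWu, Finset.mem_filter, Finset.mem_erase]
          exact ⟨⟨fun h => huF (h ▸ hy), hFW hy⟩,
            hindins u (Finset.mem_insert_self u F) y (Finset.mem_insert_of_mem hy)⟩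
        · rintro ⟨hFWu, hFind⟩
          have hFW : F ⊆ W := fun y hy =>
            Finset.mem_of_mem_erase (hWuW (hFWu hy))
          have huF : u ∉ F := fun h =>
            (Finset.mem_erase.mp (hWuW (hFWu h))).1 rfl
          have hnadj : ∀ y ∈ F, ¬ G.Adj u y := by
            intro y hy
            exact (Finset.mem_filter.mp (hFWu hy)).2
          refine ⟨⟨hFW, hFind⟩, huF, Finset.insert_subset huW hFW, ?_⟩
          intro a ha b hb
          rcases Finset.mem_insert.mp ha with rfl | ha' <;>
            rcases Finset.mem_insert.mp hb with rfl | hb'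
          · exact G.irrefl
          · exact hnadj b hb'
          · exact fun h => hnadj a ha' h.symm
          · exact hFind a ha' b hb'
      refine IsVertexDecomposable.step _ u ?_ ?_ ?_
      · rw [hdel]
        exact ih (W.erase u) (Finset.erase_ssubset huW)
      · rw [hlink]
        exact ih Wu (Finset.ssubset_of_subset_of_ssubset hWuW (Finset.erase_ssubset huW))
      · rw [hdel, hlink]
        intro F hF hfacet
        rw [mem_indOn] at hF
        obtain ⟨hFWu, hFind⟩ := hF
        have hxF : x ∉ F := by
          intro h
          exact (Finset.mem_filter.mp (hFWu h)).2 hxu.symm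
        have hins : insert x F ∈ (indOn G (W.erase u)).faces := by
          rw [mem_indOn]
          constructor
          · exact Finset.insert_subset (Finset.mem_erase.mpr ⟨hxune, hxW⟩)
              (fun y hy => hWuW (hFWu hy))
          · intro a ha b hb
            have hside : ∀ c ∈ F, ¬ G.Adj x c := by
              intro c hc hxc
              have hcW : c ∈ W := Finset.mem_of_mem_erase (hWuW (hFWu hc))
              have hcu : c ≠ u := (Finset.mem_erase.mp (hWuW (hFWu hc))).1
              exact (Finset.mem_filter.mp (hFWu hc)).2
                (hclq c hcW u huW hxc hxu hcu).symm
            rcases Finset.mem_insert.mp ha with rfl | ha' <;>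
              rcases Finset.mem_insert.mp hb with rfl | hb'
            · exact G.irrefl
            · exact hside b hb'
            · exact fun h => hside a ha' h.symm
            · exact hFind a ha' b hb'
        have := (mem_facetSet'.mp hfacet).2 _ hins (Finset.subset_insert _ _)
        exact hxF (this ▸ Finset.mem_insert_self x F)
    · push_neg at hE
      refine IsVertexDecomposable.simplex _ W ?_
      ext F
      simp only [indOn, Finset.mem_filter, Finset.mem_univ, true_and, Finset.mem_powerset]
      exact ⟨fun h => h.1, fun h => ⟨h, fun a ha b hb => hE a (h ha) b (h hb)⟩⟩

end Stmt17Aux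

/-- If `Ind(G)` is a quasi-forest and `G` has no induced 4-cycle, then
`Ind(G)` is vertex decomposable. -/
theorem stmt17 {V : Type*} [DecidableEq V] [Fintype V] (G : SimpleGraph V)
    [DecidableRel G.Adj] (hq : (indComplex G).IsQuasiForest)
    (h4 : ¬ G.HasInducedCycle 4) :
    IsVertexDecomposable (indComplex G) := by
  have he : indComplex G = indOn G Finset.univ := by
    apply SimplicialComplex.ext'
    ext F
    simp [indComplex, indOn]
  rw [he] at hq ⊢
  exact vd_indOn G h4
    (fun U hU => cosimp_exists G Finset.univ hq U (Finset.subset_univ U) hU)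
    Finset.univ
end
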